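/- arXiv:2510.23973 — 7 statements merged into one kernel-verified Lean document; each statement's English description precedes it below -/
import Mathlib

section
/- Let V be a finite-dimensional real normed vector space and A a linear endomorphism of V all of whose complex eigenvalues are real (equivalently, V is the direct sum of the generalized eigenspaces of A over ℝ). Let β : ℝ → V be a continuous curve satisfying β(t+s) = β(t) + e^{tA} β(s) for all t, s ∈ ℝ. If there exists a sequence t_k → +∞ (respectively t_k → −∞) such that the sequence (β(t_k)) is bounded, then β(t) lies in V⁻ (respectively V⁺) for every t ∈ ℝ, where V⁻ (respectively V⁺) denotes the sum of the generalized eigenspaces of A for negative (respectively positive) eigenvalues. In particular, in the first case the set {β(t) : t ≥ 0} is bounded. -/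
open Filter Bornology NormedSpace

open Topology

set_option maxHeartbeats 1000000
set_option synthInstance.maxHeartbeats 1000000

set_option linter.unusedSectionVars false
namespace CurveCocycleAux

variable {V : Type*} [NormedAddCommGroup V] [NormedSpace ℝ V] [FiniteDimensional ℝ V]

noncomputable instance instNormedAlgebraRatCLM : NormedAlgebra ℚ (V →L[ℝ] V) :=
  NormedAlgebra.restrictScalars ℚ ℝ _

theorem pow_apply_norm_le (T : V →L[ℝ] V) (j : ℕ) (y : V) : ‖(T ^ j) y‖ ≤ ‖T‖ ^ j * ‖y‖ := by
  induction j generalizing y with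
  | zero => simp
  | succ j ih =>
    rw [pow_succ, ContinuousLinearMap.mul_apply]
    calc ‖(T ^ j) (T y)‖ ≤ ‖T‖ ^ j * ‖T y‖ := ih (T y)
    _ ≤ ‖T‖ ^ j * (‖T‖ * ‖y‖) :=
        mul_le_mul_of_nonneg_left (T.le_opNorm y) (by positivity)
    _ = ‖T‖ ^ (j+1) * ‖y‖ := by ring

theorem exp_apply_eq_sum (A : V →L[ℝ] V) (μ : ℝ) (x : V) (k : ℕ)
    (hx : ((A - μ • (1 : V →L[ℝ] V)) ^ k) x = 0) (s : ℝ) :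
    exp (s • A) x = Real.exp (s * μ) •
      ∑ j ∈ Finset.range k, ((s ^ j / j.factorial) • ((A - μ • (1 : V →L[ℝ] V)) ^ j) x) := by
  set N : V →L[ℝ] V := A - μ • 1 with hN
  have hsplit : s • A = (s * μ) • (1 : V →L[ℝ] V) + s • N := by
    rw [hN]; rw [smul_sub]; rw [smul_smul]; abel
  have hc : Commute ((s * μ) • (1 : V →L[ℝ] V)) (s • N) :=
    Commute.smul_left (Commute.smul_right (Commute.one_left N) _) _
  rw [hsplit, exp_add_of_commute hc]
  have h1 : exp ((s * μ) • (1 : V →L[ℝ] V)) = Real.exp (s * μ) • (1 : V →L[ℝ] V) := by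
    rw [← Algebra.algebraMap_eq_smul_one, ← algebraMap_exp_comm, Real.exp_eq_exp_ℝ,
      Algebra.algebraMap_eq_smul_one]
  rw [h1]
  have h2 : exp (s • N) x = ∑ j ∈ Finset.range k, ((s ^ j / j.factorial) • ((N ^ j) x)) := by
    have hs : Summable fun n : ℕ => ((n.factorial)⁻¹ : ℝ) • (s • N) ^ n :=
      expSeries_summable' (𝕂 := ℝ) (s • N)
    have happ := hs.hasSum.mapL (ContinuousLinearMap.apply ℝ V x)
    simp only [ContinuousLinearMap.apply_apply] at happ
    have hterm : ∀ n : ℕ, (((n.factorial)⁻¹ : ℝ) • (s • N) ^ n) x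
        = (s ^ n / n.factorial) • ((N ^ n) x) := by
      intro n
      rw [smul_pow]
      simp [smul_smul, div_eq_inv_mul, mul_comm]
    have hzero : ∀ n ∉ Finset.range k, (((n.factorial)⁻¹ : ℝ) • (s • N) ^ n) x = 0 := by
      intro n hn
      rw [hterm n]
      have hkn : k ≤ n := by simpa using hn
      have : (N ^ n) x = 0 := by
        rw [← Nat.sub_add_cancel hkn, pow_add, ContinuousLinearMap.mul_apply, hx, map_zero]
      rw [this, smul_zero]
    rw [exp_eq_tsum ℝ]
    have ht : (∑' n : ℕ, ((n.factorial)⁻¹ : ℝ) • (s • N) ^ n) x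
        = ∑' n : ℕ, (((n.factorial)⁻¹ : ℝ) • (s • N) ^ n) x := happ.tsum_eq.symm
    rw [ht, tsum_eq_sum hzero]
    exact Finset.sum_congr rfl fun n _ => hterm n
  calc (Real.exp (s * μ) • (1 : V →L[ℝ] V) * exp (s • N)) x
      = Real.exp (s * μ) • (exp (s • N) x) := by
        simp [ContinuousLinearMap.mul_apply]
    _ = _ := by rw [h2]

/-- bridge between continuous and plain linear powers -/
theorem clm_pow_apply (A : V →L[ℝ] V) (μ : ℝ) (k : ℕ) (x : V) :
    ((A - μ • (1 : V →L[ℝ] V)) ^ k) x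
      = (((A : V →ₗ[ℝ] V) - μ • (1 : Module.End ℝ V)) ^ k) x := by
  induction k generalizing x with
  | zero => rfl
  | succ k ih =>
    rw [pow_succ', pow_succ', ContinuousLinearMap.mul_apply, Module.End.mul_apply, ih]
    simp [ContinuousLinearMap.sub_apply, ContinuousLinearMap.smul_apply,
      LinearMap.sub_apply, LinearMap.smul_apply]

theorem mem_maxGen_iff (A : V →L[ℝ] V) (μ : ℝ) (x : V) :
    x ∈ Module.End.maxGenEigenspace (A : V →ₗ[ℝ] V) μ
      ↔ ∃ k : ℕ, ((A - μ • (1 : V →L[ℝ] V)) ^ k) x = 0 := by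
  rw [Module.End.mem_maxGenEigenspace]
  exact exists_congr fun k => by rw [clm_pow_apply]

theorem exp_fix (A : V →L[ℝ] V) (y : V) (hy : A y = 0) (t : ℝ) : exp (t • A) y = y := by
  have h : ((A - (0:ℝ) • (1 : V →L[ℝ] V)) ^ 1) y = 0 := by simpa using hy
  rw [exp_apply_eq_sum A 0 y 1 h t]
  simp


theorem tendsto_exp_neg_mul_abs_pow (μ : ℝ) (hμ : 0 < μ) (j : ℕ) :
    Tendsto (fun s : ℝ => Real.exp (-s * μ) * |s| ^ j) atTop (𝓝 0) := by
  have h1 : Tendsto (fun x : ℝ => x ^ j * Real.exp (-x)) atTop (𝓝 0) :=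
    Real.tendsto_pow_mul_exp_neg_atTop_nhds_zero j
  have h2 : Tendsto (fun s : ℝ => μ * s) atTop atTop :=
    Tendsto.const_mul_atTop hμ tendsto_id
  have h3 := (h1.comp h2).const_mul ((μ ^ j)⁻¹)
  rw [mul_zero] at h3
  apply h3.congr'
  filter_upwards [eventually_ge_atTop (0:ℝ)] with s hs
  have habs : |s| = s := abs_of_nonneg hs
  have hμj : (μ ^ j) ≠ 0 := by positivity
  simp only [Function.comp, habs, mul_pow]
  rw [show -(μ * s) = -s * μ by ring]
  field_simp

theorem eig_pos_eq_zero (A : V →L[ℝ] V) (μ : ℝ) (hμ : 0 < μ) (w : V)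
    (hw : w ∈ Module.End.maxGenEigenspace (A : V →ₗ[ℝ] V) μ)
    (sk : ℕ → ℝ) (hsk : Tendsto sk atTop atTop) (C : ℝ)
    (hC : ∀ n, ‖exp (sk n • A) w‖ ≤ C) : w = 0 := by
  obtain ⟨k, hk⟩ := (mem_maxGen_iff A μ w).1 hw
  set N : V →L[ℝ] V := A - μ • 1 with hN
  -- exp (s • A) commutes with N ^ k
  have hcomm : ∀ s : ℝ, Commute (exp (s • A)) (N ^ k) := by
    intro s
    exact Commute.exp_left (Commute.smul_left (Commute.pow_right ((Commute.refl A).sub_right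
      (Commute.smul_right (Commute.one_right A) μ)) k) s)
  have hy : ∀ s : ℝ, (N ^ k) (exp (s • A) w) = 0 := by
    intro s
    have := congrArg (fun T : V →L[ℝ] V => T w) (hcomm s)
    simp only [ContinuousLinearMap.mul_apply] at this
    rw [← this, hk, map_zero]
  -- inverse identity
  have hinv : ∀ s : ℝ, exp ((-s) • A) (exp (s • A) w) = w := by
    intro s
    have hc : Commute ((-s) • A) (s • A) :=
      Commute.smul_left (Commute.smul_right (Commute.refl A) s) (-s)
    have : exp ((-s) • A) * exp (s • A) = 1 := by
      rw [← exp_add_of_commute hc]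
      have : (-s) • A + s • A = 0 := by rw [← add_smul]; simp
      rw [this, exp_zero]
    calc exp ((-s) • A) (exp (s • A) w)
        = (exp ((-s) • A) * exp (s • A)) w := rfl
      _ = w := by rw [this]; rfl
  have hCnn : 0 ≤ C := le_trans (norm_nonneg _) (hC 0)
  -- uniform bound on ‖w‖
  have hbound : ∀ n, ‖w‖ ≤ Real.exp (-(sk n) * μ) *
      ∑ j ∈ Finset.range k, (|sk n| ^ j / j.factorial) * (‖N‖ ^ j * C) := by
    intro n
    set s := sk n
    have h1 : w = exp ((-s) • A) (exp (s • A) w) := (hinv s).symm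
    rw [h1, exp_apply_eq_sum A μ _ k (hy s) (-s)]
    rw [norm_smul, Real.norm_eq_abs, Real.abs_exp]
    refine mul_le_mul_of_nonneg_left ?_ (le_of_lt (Real.exp_pos _))
    refine le_trans (norm_sum_le _ _) ?_
    refine Finset.sum_le_sum fun j _ => ?_
    rw [norm_smul, Real.norm_eq_abs]
    have habs : |(-s) ^ j / (j.factorial : ℝ)| = |s| ^ j / j.factorial := by
      rw [abs_div, abs_pow, abs_neg, Nat.abs_cast]
    rw [habs]
    refine mul_le_mul_of_nonneg_left ?_ (by positivity)
    calc ‖(N ^ j) (exp (s • A) w)‖ ≤ ‖N‖ ^ j * ‖exp (s • A) w‖ :=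
        pow_apply_norm_le N j _
      _ ≤ ‖N‖ ^ j * C := mul_le_mul_of_nonneg_left (hC n) (by positivity)
  -- the bound tends to zero
  have htend : Tendsto (fun n => Real.exp (-(sk n) * μ) *
      ∑ j ∈ Finset.range k, (|sk n| ^ j / j.factorial) * (‖N‖ ^ j * C)) atTop (𝓝 0) := by
    have hg : Tendsto (fun s : ℝ => Real.exp (-s * μ) *
        ∑ j ∈ Finset.range k, (|s| ^ j / j.factorial) * (‖N‖ ^ j * C)) atTop (𝓝 0) := by
      have : ∀ s : ℝ, Real.exp (-s * μ) *
          ∑ j ∈ Finset.range k, (|s| ^ j / j.factorial) * (‖N‖ ^ j * C)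
          = ∑ j ∈ Finset.range k,
            (Real.exp (-s * μ) * |s| ^ j) * ((‖N‖ ^ j * C) / j.factorial) := by
        intro s; rw [Finset.mul_sum]; refine Finset.sum_congr rfl fun j _ => by ring
      simp only [this]
      have h0 : (0:ℝ) = ∑ j ∈ Finset.range k, 0 * ((‖N‖ ^ j * C) / j.factorial) := by simp
      rw [h0]
      refine tendsto_finset_sum _ fun j _ => ?_
      exact (tendsto_exp_neg_mul_abs_pow μ hμ j).mul_const _
    exact hg.comp hsk
  have : ‖w‖ ≤ 0 := ge_of_tendsto' htend hbound
  simpa using le_antisymm this (norm_nonneg w)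

theorem eig_zero_ker (A : V →L[ℝ] V) (w : V) (k : ℕ) (hk : (A ^ k) w = 0)
    (sk : ℕ → ℝ) (hsk : Tendsto sk atTop atTop) (C : ℝ)
    (hC : ∀ n, ‖exp (sk n • A) w‖ ≤ C) : A w = 0 := by
  have hCnn : 0 ≤ C := le_trans (norm_nonneg _) (hC 0)
  -- exp formula when powers above m+1 vanish
  have hexp : ∀ m : ℕ, (A ^ (m+1)) w = 0 → ∀ s : ℝ,
      exp (s • A) w = ∑ j ∈ Finset.range (m+1), (s ^ j / j.factorial) • (A ^ j) w := by
    intro m hm s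
    have h0 : ((A - (0:ℝ) • (1 : V →L[ℝ] V)) ^ (m+1)) w = 0 := by simpa using hm
    rw [exp_apply_eq_sum A 0 w (m+1) h0 s]
    simp
  -- main step : if all higher powers vanish then A^m w = 0 (m ≥ 1)
  have claim : ∀ m : ℕ, 1 ≤ m → (∀ j, m < j → (A ^ j) w = 0) → (A ^ m) w = 0 := by
    intro m hm hj
    have hm1 : (A ^ (m+1)) w = 0 := hj _ (lt_add_one m)
    set c : ℕ → V := fun n => ((sk n) ^ m)⁻¹ • exp (sk n • A) w with hc
    -- first limit : c → 0
    have hlim1 : Tendsto c atTop (𝓝 0) := by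
      have hpow : Tendsto (fun n => |sk n ^ m|) atTop atTop :=
        (tendsto_abs_atTop_atTop.comp ((tendsto_pow_atTop (by omega : m ≠ 0)).comp hsk))
      have hb : Tendsto (fun n => |sk n ^ m|⁻¹ * C) atTop (𝓝 0) := by
        have := hpow.inv_tendsto_atTop.mul_const C
        simpa using this
      refine squeeze_zero_norm (fun n => ?_) hb
      rw [hc]
      simp only [norm_smul, norm_inv, Real.norm_eq_abs]
      exact mul_le_mul_of_nonneg_left (hC n) (by positivity)
    -- second limit : c → (m !)⁻¹ • A^m w
    have hlim2 : Tendsto c atTop (𝓝 (((m.factorial : ℝ))⁻¹ • (A ^ m) w)) := by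
      have hformula : ∀ n, c n = ∑ j ∈ Finset.range (m+1),
          (((sk n) ^ m)⁻¹ * ((sk n) ^ j / j.factorial)) • (A ^ j) w := by
        intro n
        rw [hc]
        simp only [hexp m hm1 (sk n), Finset.smul_sum, smul_smul]
      refine Tendsto.congr (fun n => (hformula n).symm) ?_
      have hlimcoef : ∀ j ∈ Finset.range (m+1),
          Tendsto (fun n => (((sk n) ^ m)⁻¹ * ((sk n) ^ j / j.factorial)) • (A ^ j) w)
            atTop (𝓝 ((if j = m then ((m.factorial : ℝ))⁻¹ else 0) • (A ^ j) w)) := by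
        intro j hjr
        have hjm : j ≤ m := by
          have := Finset.mem_range.1 hjr; omega
        refine Tendsto.smul_const ?_ _
        rcases eq_or_lt_of_le hjm with heq | hlt
        · subst heq
          rw [if_pos rfl]
          have heq : (fun n => (((sk n) ^ j)⁻¹ * ((sk n) ^ j / j.factorial)))
              =ᶠ[atTop] (fun _ => ((j.factorial : ℝ))⁻¹) := by
            filter_upwards [hsk.eventually_gt_atTop 0] with n hn
            have hne : (sk n) ^ j ≠ 0 := by positivity
            field_simp
          exact Tendsto.congr' heq.symm tendsto_const_nhds
        · rw [if_neg (by omega)]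
          have hev : (fun n => (((sk n) ^ m)⁻¹ * ((sk n) ^ j / j.factorial)))
              =ᶠ[atTop] (fun n => ((sk n) ^ (m - j))⁻¹ * ((j.factorial : ℝ))⁻¹) := by
            filter_upwards [hsk.eventually_gt_atTop 0] with n hn
            have h1 : (sk n) ^ m = (sk n) ^ (m - j) * (sk n) ^ j := by
              rw [← pow_add]; congr 1; omega
            have hne : (sk n) ≠ 0 := ne_of_gt hn
            rw [h1]
            field_simp
          have hto : Tendsto (fun n => ((sk n) ^ (m - j))⁻¹ * ((j.factorial : ℝ))⁻¹)
              atTop (𝓝 0) := by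
            have hpow : Tendsto (fun n => (sk n) ^ (m - j)) atTop atTop :=
              (tendsto_pow_atTop (by omega : m - j ≠ 0)).comp hsk
            have := hpow.inv_tendsto_atTop.mul_const ((j.factorial : ℝ))⁻¹
            simpa using this
          exact Tendsto.congr' hev.symm hto
      have hval : ((m.factorial : ℝ))⁻¹ • (A ^ m) w
          = ∑ j ∈ Finset.range (m+1),
            (if j = m then ((m.factorial : ℝ))⁻¹ else 0) • (A ^ j) w := by
        simp only [ite_smul, zero_smul]
        rw [Finset.sum_ite_eq' (Finset.range (m+1)) m
          (fun j => ((m.factorial : ℝ))⁻¹ • (A ^ j) w)]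
        rw [if_pos (Finset.self_mem_range_succ m)]
      rw [hval]
      exact tendsto_finset_sum _ hlimcoef
    have h0 : (0 : V) = ((m.factorial : ℝ))⁻¹ • (A ^ m) w := tendsto_nhds_unique hlim1 hlim2
    have : (A ^ m) w = 0 := by
      have hfac : ((m.factorial : ℝ))⁻¹ ≠ 0 := by positivity
      rcases smul_eq_zero.1 h0.symm with h | h
      · exact absurd h hfac
      · exact h
    exact this
  -- downward induction
  have main : ∀ i : ℕ, ∀ m, 1 ≤ m → k ≤ m + i → (A ^ m) w = 0 := by
    intro i
    induction i with
    | zero =>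
      intro m _ hkm
      obtain ⟨d, hd⟩ := Nat.exists_eq_add_of_le (by omega : k ≤ m)
      rw [hd, add_comm, pow_add, ContinuousLinearMap.mul_apply, hk, map_zero]
    | succ i ih =>
      intro m hm hkm
      by_cases h : k ≤ m + i
      · exact ih m hm h
      · exact claim m hm fun j hj => ih j (by omega) (by omega)
  have := main k 1 le_rfl (by omega)
  simpa using this

theorem summable_of_mem_neg (A : V →L[ℝ] V) (x : V)
    (hx : x ∈ ⨆ μ : ℝ, ⨆ _ : μ < 0, Module.End.maxGenEigenspace (A : V →ₗ[ℝ] V) μ) :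
    Summable fun n : ℕ => ‖exp ((n : ℝ) • A) x‖ := by
  refine Submodule.iSup_induction
    (fun μ : ℝ => ⨆ _ : μ < 0, Module.End.maxGenEigenspace (A : V →ₗ[ℝ] V) μ)
    (motive := fun y => Summable fun n : ℕ => ‖exp ((n : ℝ) • A) y‖) hx ?_ ?_ ?_
  · intro μ y hy'
    have hy : y ∈ ⨆ _ : μ < 0, Module.End.maxGenEigenspace (A : V →ₗ[ℝ] V) μ := hy'
    by_cases hμ : μ < 0
    · rw [iSup_pos hμ] at hy
      obtain ⟨k, hk⟩ := (mem_maxGen_iff A μ y).1 hy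
      set N : V →L[ℝ] V := A - μ • 1 with hN
      set r : ℝ := Real.exp μ with hr
      have hr1 : ‖r‖ < 1 := by
        rw [hr, Real.norm_eq_abs, abs_of_pos (Real.exp_pos μ)]
        calc Real.exp μ < Real.exp 0 := Real.exp_lt_exp.2 hμ
          _ = 1 := Real.exp_zero
      have hbound : ∀ n : ℕ, ‖exp ((n : ℝ) • A) y‖
          ≤ ∑ j ∈ Finset.range k, ((n : ℝ) ^ j * r ^ n) * (‖(N ^ j) y‖ / j.factorial) := by
        intro n
        rw [exp_apply_eq_sum A μ y k hk (n : ℝ)]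
        rw [norm_smul, Real.norm_eq_abs, Real.abs_exp]
        have hexpn : Real.exp ((n : ℝ) * μ) = r ^ n := by
          rw [hr, ← Real.exp_nat_mul]
        rw [hexpn]
        calc r ^ n * ‖∑ j ∈ Finset.range k, ((n:ℝ) ^ j / j.factorial) • (N ^ j) y‖
            ≤ r ^ n * ∑ j ∈ Finset.range k, ((n:ℝ) ^ j / j.factorial) * ‖(N ^ j) y‖ := by
              refine mul_le_mul_of_nonneg_left ?_ (by positivity)
              refine le_trans (norm_sum_le _ _) (Finset.sum_le_sum fun j _ => ?_)
              rw [norm_smul, Real.norm_eq_abs, abs_of_nonneg (by positivity)]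
          _ = ∑ j ∈ Finset.range k, ((n : ℝ) ^ j * r ^ n) * (‖(N ^ j) y‖ / j.factorial) := by
              rw [Finset.mul_sum]; exact Finset.sum_congr rfl fun j _ => by ring
      refine Summable.of_nonneg_of_le (fun n => norm_nonneg _) hbound ?_
      refine summable_sum fun j _ => ?_
      exact (summable_pow_mul_geometric_of_norm_lt_one j hr1).mul_right _
    · rw [iSup_neg hμ] at hy
      have : y = 0 := by simpa using hy
      subst this
      simp only [map_zero, norm_zero]
      exact summable_zero
  · simp only [map_zero, norm_zero]
    exact summable_zero
  · intro y z hy hz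
    refine Summable.of_nonneg_of_le (fun n => norm_nonneg _) (fun n => ?_) (hy.add hz)
    rw [map_add]
    exact norm_add_le _ _

section Proj

variable (A : V →L[ℝ] V)

local notation "E" => fun μ : ℝ => Module.End.maxGenEigenspace (A : V →ₗ[ℝ] V) μ

theorem mapsTo_E (μ : ℝ) (x : V) (hx : x ∈ E μ) : A x ∈ E μ := by
  obtain ⟨k, hk⟩ := (mem_maxGen_iff A μ x).1 hx
  refine (mem_maxGen_iff A μ (A x)).2 ⟨k, ?_⟩
  have hcomm : Commute A ((A - μ • (1 : V →L[ℝ] V)) ^ k) :=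
    Commute.pow_right ((Commute.refl A).sub_right
      (Commute.smul_right (Commute.one_right A) μ)) k
  have := congrArg (fun T : V →L[ℝ] V => T x) hcomm
  simp only [ContinuousLinearMap.mul_apply] at this
  rw [← this, hk, map_zero]

theorem mapsTo_U (μ : ℝ) (x : V)
    (hx : x ∈ ⨆ ν : ℝ, ⨆ _ : ν ≠ μ, E ν) : A x ∈ ⨆ ν : ℝ, ⨆ _ : ν ≠ μ, E ν := by
  refine Submodule.iSup_induction (fun ν : ℝ => ⨆ _ : ν ≠ μ, E ν)
    (motive := fun y => A y ∈ ⨆ ν : ℝ, ⨆ _ : ν ≠ μ, E ν) hx ?_ ?_ ?_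
  · intro ν y hy'
    have hy : y ∈ ⨆ _ : ν ≠ μ, E ν := hy'
    by_cases hν : ν ≠ μ
    · rw [iSup_pos hν] at hy
      exact Submodule.mem_iSup_of_mem ν (Submodule.mem_iSup_of_mem hν (mapsTo_E A ν y hy))
    · rw [iSup_neg hν] at hy
      have : y = 0 := by simpa using hy
      subst this
      rw [map_zero]
      exact Submodule.zero_mem _
  · show A (0:V) ∈ _
    rw [map_zero]; exact Submodule.zero_mem _
  · intro y z hy hz
    show A (y + z) ∈ _
    rw [map_add]; exact Submodule.add_mem _ hy hz

theorem isCompl_EU (hA : (⨆ μ : ℝ, Module.End.maxGenEigenspace (A : V →ₗ[ℝ] V) μ) = ⊤)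
    (μ : ℝ) : IsCompl (E μ) (⨆ ν : ℝ, ⨆ _ : ν ≠ μ, E ν) := by
  constructor
  · exact Module.End.independent_maxGenEigenspace (A : V →ₗ[ℝ] V) μ
  · rw [codisjoint_iff]
    rw [← top_le_iff, ← hA]
    refine iSup_le fun ν => ?_
    by_cases h : ν = μ
    · subst h; exact le_sup_left
    · exact le_sup_of_le_right (le_iSup_of_le ν (le_iSup_of_le h le_rfl))

theorem proj_exists (hA : (⨆ μ : ℝ, Module.End.maxGenEigenspace (A : V →ₗ[ℝ] V) μ) = ⊤)
    (μ : ℝ) :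
    ∃ P : V →L[ℝ] V, (∀ x, P x ∈ E μ) ∧ (∀ x ∈ E μ, P x = x) ∧
      (∀ x ∈ (⨆ ν : ℝ, ⨆ _ : ν ≠ μ, E ν), P x = 0) ∧
      (∀ (s : ℝ) (x : V), P (exp (s • A) x) = exp (s • A) (P x)) := by
  set U : Submodule ℝ V := ⨆ ν : ℝ, ⨆ _ : ν ≠ μ, E ν with hU
  have hc : IsCompl (E μ) U := isCompl_EU A hA μ
  set π := (E μ).projectionOnto U hc with hπ
  set Pl : V →ₗ[ℝ] V := (E μ).subtype ∘ₗ π with hPl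
  have hPlmem : ∀ x, Pl x ∈ E μ := fun x => (π x).2
  have hPlleft : ∀ x ∈ E μ, Pl x = x := by
    intro x hx
    have := Submodule.projectionOnto_apply_of_mem_left hc hx
    simp only [hPl, LinearMap.comp_apply, Submodule.subtype_apply]
    rw [this]
  have hPlright : ∀ x ∈ U, Pl x = 0 := by
    intro x hx
    simp only [hPl, LinearMap.comp_apply, Submodule.subtype_apply]
    rw [Submodule.projectionOnto_apply_of_mem_right hc hx]
    rfl
  have hsub : ∀ x, x - Pl x ∈ U := by
    intro x
    rw [← Submodule.projectionOnto_apply_eq_zero_iff hc]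
    have h1 : π (Pl x) = π x := by
      simp only [hPl, LinearMap.comp_apply, Submodule.subtype_apply]
      exact Submodule.projectionOnto_apply_left hc (π x)
    rw [map_sub, h1, sub_self]
  have hPA : ∀ x, Pl (A x) = A (Pl x) := by
    intro x
    have hx : A x = A (Pl x) + A (x - Pl x) := by rw [← map_add]; congr 1; abel
    rw [hx, map_add, hPlleft _ (mapsTo_E A μ _ (hPlmem x)),
      hPlright _ (mapsTo_U A μ _ (hsub x)), add_zero]
  set P : V →L[ℝ] V := LinearMap.toContinuousLinearMap Pl with hP
  have hPapp : ∀ x, P x = Pl x := fun x => rfl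
  refine ⟨P, fun x => hPlmem x, fun x hx => hPlleft x hx, fun x hx => hPlright x hx, ?_⟩
  intro s x
  have hcomm : Commute (s • A) P := by
    show (s • A) * P = P * (s • A)
    ext y
    simp only [ContinuousLinearMap.mul_apply, ContinuousLinearMap.smul_apply]
    rw [hPapp, hPapp, map_smul, hPA]
  have hce : Commute (exp (s • A)) P := Commute.exp_left hcomm
  have := congrArg (fun T : V →L[ℝ] V => T x) hce
  simp only [ContinuousLinearMap.mul_apply] at this
  exact (congrArg _ rfl).trans this.symm

end Proj

theorem main_neg (A : V →L[ℝ] V)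
    (hA : (⨆ μ : ℝ, Module.End.maxGenEigenspace (A : V →ₗ[ℝ] V) μ) = ⊤)
    (β : ℝ → V) (hβ : Continuous β)
    (hcoc : ∀ t s : ℝ, β (t + s) = β t + exp (t • A) (β s))
    (tk : ℕ → ℝ) (htk : Tendsto tk atTop atTop)
    (hbd : IsBounded (Set.range fun k => β (tk k))) :
    ∀ t : ℝ, β t ∈ ⨆ μ : ℝ, ⨆ _ : μ < 0,
      Module.End.maxGenEigenspace (A : V →ₗ[ℝ] V) μ := by
  classical
  obtain ⟨C, hC'⟩ := isBounded_iff_forall_norm_le.1 hbd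
  have hC : ∀ n, ‖β (tk n)‖ ≤ C := fun n => hC' _ (Set.mem_range_self n)
  -- uniform boundedness of exp ((tk n - t) • A) (β t)
  have key : ∀ t : ℝ, ∃ D : ℝ, ∀ n, ‖exp ((tk n - t) • A) (β t)‖ ≤ D := by
    intro t
    have h1 : ∀ n, β (tk n - t) = β (-t) + exp ((-t) • A) (β (tk n)) := by
      intro n
      have := hcoc (-t) (tk n)
      rw [show -t + tk n = tk n - t by ring] at this
      exact this
    have h2 : ∀ n, exp ((tk n - t) • A) (β t) = β (tk n) - β (tk n - t) := by
      intro n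
      have := hcoc (tk n - t) t
      rw [show tk n - t + t = tk n by ring] at this
      rw [this]; abel
    refine ⟨C + (‖β (-t)‖ + ‖exp ((-t) • A)‖ * C), fun n => ?_⟩
    rw [h2 n]
    calc ‖β (tk n) - β (tk n - t)‖ ≤ ‖β (tk n)‖ + ‖β (tk n - t)‖ := norm_sub_le _ _
      _ ≤ C + (‖β (-t)‖ + ‖exp ((-t) • A)‖ * C) := by
          refine add_le_add (hC n) ?_
          rw [h1 n]
          refine le_trans (norm_add_le _ _) (add_le_add le_rfl ?_)
          refine le_trans ((exp ((-t) • A)).le_opNorm _) ?_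
          exact mul_le_mul_of_nonneg_left (hC n) (norm_nonneg _)
  -- projections
  choose P hPmem hPleft hPright hPexp using proj_exists A hA
  -- sequences sk t
  have hsk : ∀ t : ℝ, Tendsto (fun n => tk n - t) atTop atTop := by
    intro t
    simpa [sub_eq_add_neg] using tendsto_atTop_add_const_right atTop (-t) htk
  -- positive eigenvalue components vanish
  have hpos : ∀ μ : ℝ, 0 < μ → ∀ t : ℝ, P μ (β t) = 0 := by
    intro μ hμ t
    obtain ⟨D, hD⟩ := key t
    refine eig_pos_eq_zero A μ hμ _ (hPmem μ (β t)) (fun n => tk n - t) (hsk t)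
      (‖P μ‖ * D) (fun n => ?_)
    rw [← hPexp μ]
    refine le_trans ((P μ).le_opNorm _) ?_
    exact mul_le_mul_of_nonneg_left (hD n) (norm_nonneg _)
  -- kernel property of the zero component
  set v : ℝ → V := fun t => P 0 (β t) with hv
  have hker : ∀ t : ℝ, A (v t) = 0 := by
    intro t
    obtain ⟨D, hD⟩ := key t
    obtain ⟨k, hk⟩ := (mem_maxGen_iff A 0 (v t)).1 (hPmem 0 (β t))
    have hk' : (A ^ k) (v t) = 0 := by
      have : A - (0:ℝ) • (1 : V →L[ℝ] V) = A := by simp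
      rw [← this]; exact hk
    refine eig_zero_ker A (v t) k hk' (fun n => tk n - t) (hsk t) (‖P 0‖ * D) (fun n => ?_)
    rw [hv]
    simp only []
    rw [← hPexp 0]
    refine le_trans ((P 0).le_opNorm _) ?_
    exact mul_le_mul_of_nonneg_left (hD n) (norm_nonneg _)
  -- v is additive
  have hadd : ∀ t s : ℝ, v (t + s) = v t + v s := by
    intro t s
    rw [hv]
    simp only []
    rw [hcoc t s, map_add, hPexp 0, exp_fix A _ (hker s) t]
  -- v is linear by continuity
  have hlin : ∀ t : ℝ, v t = t • v 1 := by
    have hvc : Continuous v := (P 0).continuous.comp hβ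
    set F : ℝ →+ V := AddMonoidHom.mk' v hadd with hF
    set L : ℝ →L[ℝ] V := F.toRealLinearMap hvc with hL
    intro t
    have h1 : v t = L t := rfl
    have h2 : L t = t • L 1 := by
      rw [show (t : ℝ) = t • (1:ℝ) by simp, map_smul]
      simp
    rw [h1, h2]
    congr 1
  -- v 1 = 0
  have hv1 : v 1 = 0 := by
    by_contra h
    have hpos' : 0 < ‖v 1‖ := norm_pos_iff.2 h
    have hb : ∀ n, ‖v (tk n)‖ ≤ ‖P 0‖ * C := by
      intro n
      refine le_trans ((P 0).le_opNorm _) ?_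
      exact mul_le_mul_of_nonneg_left (hC n) (norm_nonneg _)
    obtain ⟨n, hn⟩ := (htk.eventually_ge_atTop ((‖P 0‖ * C + 1) / ‖v 1‖)).exists
    have h1 : ‖v (tk n)‖ = |tk n| * ‖v 1‖ := by
      rw [hlin (tk n), norm_smul, Real.norm_eq_abs]
    have h2 : (‖P 0‖ * C + 1) ≤ |tk n| * ‖v 1‖ := by
      calc ‖P 0‖ * C + 1 = ((‖P 0‖ * C + 1) / ‖v 1‖) * ‖v 1‖ := by
            field_simp
        _ ≤ tk n * ‖v 1‖ := mul_le_mul_of_nonneg_right hn (le_of_lt hpos')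
        _ ≤ |tk n| * ‖v 1‖ :=
            mul_le_mul_of_nonneg_right (le_abs_self _) (le_of_lt hpos')
    have := hb n
    rw [h1] at this
    linarith
  -- conclusion
  intro t
  obtain ⟨f, hf, hsum⟩ := (Submodule.mem_iSup_iff_exists_finsupp _ (β t)).1
    (hA ▸ Submodule.mem_top)
  -- each component equals the projection
  have hproj : ∀ μ : ℝ, P μ (β t) = f μ := by
    intro μ
    rw [← hsum, map_finsuppSum]
    have hterm : ∀ ν ∈ f.support, P μ (f ν) = if ν = μ then f μ else 0 := by
      intro ν _
      by_cases h : ν = μ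
      · subst h; rw [if_pos rfl]; exact hPleft ν _ (hf ν)
      · rw [if_neg h]
        refine hPright μ _ ?_
        exact Submodule.mem_iSup_of_mem ν (Submodule.mem_iSup_of_mem h (hf ν))
    rw [Finsupp.sum, Finset.sum_congr rfl hterm, Finset.sum_ite_eq' f.support μ (fun _ => f μ)]
    by_cases h : μ ∈ f.support
    · rw [if_pos h]
    · rw [if_neg h]
      exact (Finsupp.notMem_support_iff.1 h).symm
  rw [← hsum, Finsupp.sum]
  refine Submodule.sum_mem _ fun μ _ => ?_
  by_cases hμ : μ < 0
  · exact Submodule.mem_iSup_of_mem μ (Submodule.mem_iSup_of_mem hμ (hf μ))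
  · have hzero : f μ = 0 := by
      rcases eq_or_lt_of_le (not_lt.1 hμ) with heq | hlt
      · rw [← hproj μ, ← heq]
        have : v t = 0 := by rw [hlin t, hv1, smul_zero]
        exact this
      · rw [← hproj μ]
        exact hpos μ hlt t
    rw [hzero]
    exact Submodule.zero_mem _

theorem beta_zero (A : V →L[ℝ] V) (β : ℝ → V)
    (hcoc : ∀ t s : ℝ, β (t + s) = β t + exp (t • A) (β s)) : β 0 = 0 := by
  have h := hcoc 0 0
  rw [add_zero, zero_smul, exp_zero, ContinuousLinearMap.one_apply] at h
  have : β 0 + 0 = β 0 + β 0 := by rw [add_zero]; exact h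
  exact (add_left_cancel this).symm

theorem bounded_of_mem_neg (A : V →L[ℝ] V) (β : ℝ → V) (hβ : Continuous β)
    (hcoc : ∀ t s : ℝ, β (t + s) = β t + exp (t • A) (β s))
    (hmem : Summable fun n : ℕ => ‖exp ((n : ℝ) • A) (β 1)‖) :
    IsBounded (β '' Set.Ici (0 : ℝ)) := by
  set T : ℝ := ∑' n : ℕ, ‖exp ((n : ℝ) • A) (β 1)‖ with hT
  have hβn : ∀ n : ℕ, β (n : ℝ) = ∑ j ∈ Finset.range n, exp ((j : ℝ) • A) (β 1) := by
    intro n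
    induction n with
    | zero => simpa using beta_zero A β hcoc
    | succ n ih =>
      have h := hcoc (n : ℝ) 1
      rw [show ((n : ℕ) + 1 : ℝ) = ((n + 1 : ℕ) : ℝ) by push_cast; ring] at h
      rw [h, ih, Finset.sum_range_succ]
  have hTn : ∀ n : ℕ, ‖β (n : ℝ)‖ ≤ T := by
    intro n
    rw [hβn n]
    refine le_trans (norm_sum_le _ _) ?_
    exact Summable.sum_le_tsum (Finset.range n) (fun j _ => norm_nonneg _) hmem
  obtain ⟨M, hM⟩ := (isCompact_Icc (a := (0:ℝ)) (b := 1)).exists_bound_of_continuousOn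
    hβ.continuousOn
  have hexpc : Continuous fun s : ℝ => exp (s • A) :=
    exp_continuous.comp (continuous_id.smul continuous_const)
  obtain ⟨K, hK⟩ := (isCompact_Icc (a := (0:ℝ)) (b := 1)).exists_bound_of_continuousOn
    hexpc.continuousOn
  have hKnn : 0 ≤ K := le_trans (norm_nonneg _) (hK 0 (by norm_num))
  have hTnn : 0 ≤ T := tsum_nonneg fun n => norm_nonneg _
  rw [isBounded_iff_forall_norm_le]
  refine ⟨M + K * T, ?_⟩
  rintro x ⟨t, ht, rfl⟩
  have ht' : (0:ℝ) ≤ t := ht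
  set n : ℕ := ⌊t⌋₊ with hn
  set s : ℝ := t - n with hs
  have hs0 : 0 ≤ s := by
    rw [hs]
    have := Nat.floor_le ht'
    linarith
  have hs1 : s ≤ 1 := by
    rw [hs]
    have := Nat.lt_floor_add_one t
    linarith
  have hsplit : β t = β s + exp (s • A) (β (n : ℝ)) := by
    have h := hcoc s (n : ℝ)
    rw [show s + (n : ℝ) = t by rw [hs]; ring] at h
    exact h
  rw [hsplit]
  refine le_trans (norm_add_le _ _) ?_
  refine add_le_add (hM s ⟨hs0, hs1⟩) ?_
  refine le_trans ((exp (s • A)).le_opNorm _) ?_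
  exact mul_le_mul (hK s ⟨hs0, hs1⟩) (hTn n) (norm_nonneg _) hKnn

theorem maxGen_neg (A : V →L[ℝ] V) (μ : ℝ) :
    Module.End.maxGenEigenspace ((-A : V →L[ℝ] V) : V →ₗ[ℝ] V) μ
      = Module.End.maxGenEigenspace (A : V →ₗ[ℝ] V) (-μ) := by
  ext x
  rw [mem_maxGen_iff (-A) μ x, mem_maxGen_iff A (-μ) x]
  have hB : (-A) - μ • (1 : V →L[ℝ] V) = -(A - (-μ) • (1 : V →L[ℝ] V)) := by
    ext y; simp; abel
  refine exists_congr fun k => ?_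
  rw [hB]
  rcases Nat.even_or_odd k with he | ho
  · rw [he.neg_pow]
  · rw [ho.neg_pow, ContinuousLinearMap.neg_apply, neg_eq_zero]

theorem hA_neg (A : V →L[ℝ] V)
    (hA : (⨆ μ : ℝ, Module.End.maxGenEigenspace (A : V →ₗ[ℝ] V) μ) = ⊤) :
    (⨆ μ : ℝ, Module.End.maxGenEigenspace ((-A : V →L[ℝ] V) : V →ₗ[ℝ] V) μ) = ⊤ := by
  rw [eq_top_iff, ← hA]
  refine iSup_le fun μ => ?_
  have : Module.End.maxGenEigenspace (A : V →ₗ[ℝ] V) μ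
      = Module.End.maxGenEigenspace ((-A : V →L[ℝ] V) : V →ₗ[ℝ] V) (-μ) := by
    rw [maxGen_neg A (-μ), neg_neg]
  rw [this]
  exact le_iSup _ (-μ)

end CurveCocycleAux


open CurveCocycleAux

/-- Let `V` be a finite-dimensional real normed vector space and `A` a linear
endomorphism of `V` all of whose complex eigenvalues are real (i.e. `V` is the sum of the real
generalized eigenspaces of `A`).  If a continuous curve `β : ℝ → V` satisfies the cocycle
property `β (t+s) = β t + e^{tA} (β s)` and is bounded along a sequence `t_k → +∞`
(resp. `t_k → -∞`), then `β t` lies in `V⁻` (resp. `V⁺`) for every `t`; in the first case the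
set `{β t : t ≥ 0}` is bounded. -/
theorem curve_cocycle_bounded_mem_stable
    {V : Type*} [NormedAddCommGroup V] [NormedSpace ℝ V] [FiniteDimensional ℝ V]
    (A : V →L[ℝ] V)
    (hA : (⨆ μ : ℝ, Module.End.maxGenEigenspace (A : V →ₗ[ℝ] V) μ) = ⊤)
    (β : ℝ → V) (hβ : Continuous β)
    (hcoc : ∀ t s : ℝ, β (t + s) = β t + exp (t • A) (β s)) :
    ((∃ t : ℕ → ℝ, Tendsto t atTop atTop ∧ IsBounded (Set.range fun k => β (t k))) →
      (∀ t : ℝ,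
        β t ∈ ⨆ μ : ℝ, ⨆ _ : μ < 0, Module.End.maxGenEigenspace (A : V →ₗ[ℝ] V) μ) ∧
      IsBounded (β '' Set.Ici (0 : ℝ))) ∧
    ((∃ t : ℕ → ℝ, Tendsto t atTop atBot ∧ IsBounded (Set.range fun k => β (t k))) →
      ∀ t : ℝ,
        β t ∈ ⨆ μ : ℝ, ⨆ _ : 0 < μ, Module.End.maxGenEigenspace (A : V →ₗ[ℝ] V) μ) := by
  constructor
  · rintro ⟨tk, htk, hbd⟩
    have hmem := main_neg A hA β hβ hcoc tk htk hbd
    exact ⟨hmem, bounded_of_mem_neg A β hβ hcoc (summable_of_mem_neg A (β 1) (hmem 1))⟩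
  · rintro ⟨tk, htk, hbd⟩ t
    set γ : ℝ → V := fun u => β (-u) with hγdef
    have hγ : Continuous γ := hβ.comp continuous_neg
    have hγcoc : ∀ u s : ℝ, γ (u + s) = γ u + exp (u • (-A)) (γ s) := by
      intro u s
      show β (-(u + s)) = β (-u) + exp (u • (-A)) (β (-s))
      have h := hcoc (-u) (-s)
      rw [show (-u) + (-s) = -(u + s) by ring] at h
      rw [h, show (-u) • A = u • (-A) by rw [smul_neg, neg_smul]]
    set tk' : ℕ → ℝ := fun n => -(tk n) with htk'def
    have htk' : Tendsto tk' atTop atTop := tendsto_neg_atBot_atTop.comp htk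
    have hran : (fun n => γ (tk' n)) = fun n => β (tk n) :=
      funext fun n => congrArg β (neg_neg (tk n))
    have hbd' : IsBounded (Set.range fun n => γ (tk' n)) := by rw [hran]; exact hbd
    have h := main_neg (-A) (hA_neg A hA) γ hγ hγcoc tk' htk' hbd' (-t)
    rw [show γ (-t) = β t from congrArg β (neg_neg t)] at h
    have hle : (⨆ μ : ℝ, ⨆ _ : μ < 0,
          Module.End.maxGenEigenspace ((-A : V →L[ℝ] V) : V →ₗ[ℝ] V) μ)
        ≤ ⨆ μ : ℝ, ⨆ _ : 0 < μ, Module.End.maxGenEigenspace (A : V →ₗ[ℝ] V) μ := by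
      refine iSup_le fun μ => iSup_le fun hμ => ?_
      rw [maxGen_neg A μ]
      exact le_iSup_of_le (-μ) (le_iSup_of_le (by linarith) le_rfl)
    exact hle h
end

section
/- Let V be a finite-dimensional real normed vector space and N a nilpotent linear endomorphism of V. Let β : ℝ → V be a continuous curve satisfying β(t+s) = β(t) + e^{tN} β(s) for all t, s ∈ ℝ. If there exists a sequence t_k → +∞ such that the sequence (β(t_k)) is bounded, then β(t) = 0 for all t ∈ ℝ. -/
open Filter Bornology NormedSpace Nat

set_option maxHeartbeats 1000000
set_option synthInstance.maxHeartbeats 200000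

lemma exp_apply_of_eq_zero
    {V : Type*} [NormedAddCommGroup V] [NormedSpace ℝ V] [CompleteSpace V]
    (A : V →L[ℝ] V) (w : V) (hw : A w = 0) : exp A w = w := by
  have hsum : Summable fun n : ℕ => (↑(n !) : ℝ)⁻¹ • A ^ n := expSeries_summable' A
  have h0 : ∀ n : ℕ, n ≠ 0 → ((↑(n !) : ℝ)⁻¹ • A ^ n) w = 0 := by
    intro n hn
    obtain ⟨m, rfl⟩ := Nat.exists_eq_succ_of_ne_zero hn
    have : (A ^ (m + 1)) w = 0 := by
      rw [pow_succ, ContinuousLinearMap.mul_apply, hw, map_zero]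
    simp [this]
  have := (ContinuousLinearMap.apply ℝ V w).map_tsum hsum
  rw [exp_eq_tsum (𝕂 := ℝ)]
  simp only [ContinuousLinearMap.apply_apply] at this
  rw [this, tsum_eq_single 0 (fun n hn => h0 n hn)]
  simp

/-- Let `V` be a finite-dimensional real normed vector space and `N` a nilpotent
linear endomorphism of `V`.  If a continuous curve `β : ℝ → V` satisfies
`β (t+s) = β t + e^{tN} (β s)` and is bounded along some sequence `t_k → +∞`,
then `β ≡ 0`. -/
theorem curve_cocycle_nilpotent_bounded_eq_zero
    {V : Type*} [NormedAddCommGroup V] [NormedSpace ℝ V] [FiniteDimensional ℝ V]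
    (N : V →L[ℝ] V) (hN : IsNilpotent N)
    (β : ℝ → V) (hβ : Continuous β)
    (hcoc : ∀ t s : ℝ, β (t + s) = β t + exp (t • N) (β s))
    (hbd : ∃ t : ℕ → ℝ, Tendsto t atTop atTop ∧ IsBounded (Set.range fun k => β (t k))) :
    ∀ t : ℝ, β t = 0 := by
  obtain ⟨n, hNn⟩ := hN
  obtain ⟨tk, htk, hbdd⟩ := hbd
  obtain ⟨C, hC⟩ := (isBounded_iff_forall_norm_le).1 hbdd
  simp only [Set.forall_mem_range] at hC
  have hβ0 : β 0 = 0 := by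
    have := hcoc 0 0
    simp only [zero_add, zero_smul, exp_zero, ContinuousLinearMap.one_apply] at this
    exact left_eq_add.1 this
  -- key descending step
  have step : ∀ j : ℕ, (∀ t, (N ^ (j + 1)) (β t) = 0) → (∀ t, (N ^ j) (β t) = 0) := by
    intro j hj
    set g : ℝ → V := fun t => (N ^ j) (β t) with hg
    have hcomm : ∀ t : ℝ, exp (t • N) * N ^ j = N ^ j * exp (t • N) := by
      intro t
      exact (Commute.exp_left (((Commute.refl N).smul_left t).pow_right j)).eq
    have hgadd : ∀ t s : ℝ, g (t + s) = g t + g s := by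
      intro t s
      have h1 : (N ^ j) (exp (t • N) (β s)) = exp (t • N) ((N ^ j) (β s)) := by
        have := congrArg (fun A : V →L[ℝ] V => A (β s)) (hcomm t).symm
        simpa using this
      have h2 : (t • N) ((N ^ j) (β s)) = 0 := by
        have : N ((N ^ j) (β s)) = (N ^ (j + 1)) (β s) := by
          rw [_root_.pow_succ']; rfl
        rw [ContinuousLinearMap.smul_apply, this, hj s, smul_zero]
      rw [hg]
      simp only [hcoc t s, map_add, h1, exp_apply_of_eq_zero _ _ h2]
    have hgcont : Continuous g := (N ^ j).continuous.comp hβ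
    let G : ℝ →+ V :=
      { toFun := g
        map_zero' := by simp [hg, hβ0]
        map_add' := hgadd }
    let L := G.toRealLinearMap hgcont
    have hL : ∀ t : ℝ, g t = t • g 1 := by
      intro t
      have h1 : L t = g t := congrFun (G.coe_toRealLinearMap hgcont) t
      have h2 : L 1 = g 1 := congrFun (G.coe_toRealLinearMap hgcont) 1
      calc g t = L t := h1.symm
        _ = L (t • (1:ℝ)) := by norm_num
        _ = t • L 1 := L.map_smul t 1
        _ = t • g 1 := by rw [h2]
    have hg1 : g 1 = 0 := by
      by_contra hne
      have hpos : 0 < ‖g 1‖ := norm_pos_iff.2 hne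
      set M : ℝ := (‖N ^ j‖ * C) / ‖g 1‖ + 1 with hM
      obtain ⟨k, hk⟩ := (htk.eventually (eventually_ge_atTop M)).exists
      have hb : ‖g (tk k)‖ ≤ ‖N ^ j‖ * C := by
        calc ‖g (tk k)‖ ≤ ‖N ^ j‖ * ‖β (tk k)‖ := (N ^ j).le_opNorm _
          _ ≤ ‖N ^ j‖ * C := by
              have := hC k
              have : (0:ℝ) ≤ ‖N ^ j‖ := norm_nonneg _
              nlinarith [hC k, norm_nonneg (N ^ j)]
      have hMpos : 0 ≤ ‖N ^ j‖ * C := le_trans (norm_nonneg _) hb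
      have hgt : ‖N ^ j‖ * C < ‖g (tk k)‖ := by
        rw [hL (tk k), norm_smul, Real.norm_eq_abs]
        have habs : M ≤ |tk k| := le_trans hk (le_abs_self _)
        have : M * ‖g 1‖ ≤ |tk k| * ‖g 1‖ :=
          mul_le_mul_of_nonneg_right habs (le_of_lt hpos)
        have hMg : M * ‖g 1‖ = ‖N ^ j‖ * C + ‖g 1‖ := by
          rw [hM, add_mul, one_mul, div_mul_cancel₀]
          exact ne_of_gt hpos
        nlinarith
      exact absurd hb (not_le.2 hgt)
    intro t
    rw [show (N ^ j) (β t) = g t from rfl, hL t, hg1, smul_zero]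
  have key : ∀ k : ℕ, ∀ t : ℝ, (N ^ (n - k)) (β t) = 0 := by
    intro k
    induction k with
    | zero => intro t; simp [hNn]
    | succ m ih =>
      rcases lt_or_ge m n with hlt | hge
      · have : n - m = (n - (m + 1)) + 1 := by omega
        rw [this] at ih
        exact step _ ih
      · have : n - (m + 1) = n - m := by omega
        rw [this]; exact ih
  intro t
  have := key n t
  simpa using this
end

section
/- Let V be a finite-dimensional real normed vector space, N a nilpotent linear endomorphism of V, and x ∈ V. If the set {e^{tN} x : t ≥ 0} is bounded, then N x = 0; equivalently, e^{tN} x = x for all t ∈ ℝ. -/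
set_option synthInstance.maxHeartbeats 1000000
set_option maxHeartbeats 1000000


open Bornology NormedSpace

/-- Let `V` be a finite-dimensional real normed vector space, `N` a nilpotent
linear endomorphism of `V` and `x ∈ V`.  If the set `{e^{tN} x : t ≥ 0}` is bounded, then
`N x = 0`; equivalently, `e^{tN} x = x` for all `t ∈ ℝ`. -/
theorem nilpotent_bounded_orbit_fixed
    {V : Type*} [NormedAddCommGroup V] [NormedSpace ℝ V] [FiniteDimensional ℝ V]
    (N : V →L[ℝ] V) (hN : IsNilpotent N) (x : V)
    (hbd : IsBounded {y : V | ∃ t : ℝ, 0 ≤ t ∧ y = exp (t • N) x}) :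
    N x = 0 ∧ ∀ t : ℝ, exp (t • N) x = x := by
  classical
  obtain ⟨m, hm⟩ := hN
  set n := m + 2 with hn
  have hNn : N ^ n = 0 := pow_eq_zero_of_le (by omega) hm
  obtain ⟨C, hC⟩ := isBounded_iff_forall_norm_le.mp hbd
  have hexp : ∀ t : ℝ, exp (t • N) x
      = ∑ k ∈ Finset.range n, ((k.factorial : ℝ)⁻¹ * t ^ k) • (N ^ k) x := by
    intro t
    have h1 : exp (t • N) = ∑ k ∈ Finset.range n, (k.factorial : ℝ)⁻¹ • (t • N) ^ k := by
      rw [exp_eq_tsum ℝ]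
      refine tsum_eq_sum ?_
      intro k hk
      have hk' : n ≤ k := le_of_not_gt (by simpa using hk)
      have : (t • N) ^ k = 0 := by
        rw [smul_pow, pow_eq_zero_of_le hk' hNn, smul_zero]
      simp [this]
    rw [h1, ContinuousLinearMap.sum_apply]
    refine Finset.sum_congr rfl fun k _ => ?_
    simp [smul_pow, smul_smul]
  -- the key claim
  have hNx : N x = 0 := by
    refine eq_zero_of_forall_dual_eq_zero ℝ fun φ => ?_
    -- the polynomial
    set p : Polynomial ℝ :=
      ∑ k ∈ Finset.range n, Polynomial.C ((k.factorial : ℝ)⁻¹ * φ ((N ^ k) x)) * Polynomial.X ^ k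
      with hp
    have heval : ∀ t : ℝ, p.eval t = φ (exp (t • N) x) := by
      intro t
      rw [hexp t, map_sum]
      simp only [hp, Polynomial.eval_finset_sum, Polynomial.eval_mul, Polynomial.eval_C,
        Polynomial.eval_pow, Polynomial.eval_X, map_smul, smul_eq_mul]
      exact Finset.sum_congr rfl fun k _ => by ring
    have hdeg : p.degree ≤ 0 := by
      rw [← Polynomial.abs_isBoundedUnder_iff]
      refine ⟨‖φ‖ * C, ?_⟩
      rw [Filter.eventually_map]
      filter_upwards [Filter.eventually_ge_atTop (0 : ℝ)] with t ht
      rw [heval t]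
      calc |φ (exp (t • N) x)| ≤ ‖φ‖ * ‖exp (t • N) x‖ := φ.le_opNorm _
        _ ≤ ‖φ‖ * C := by
            refine mul_le_mul_of_nonneg_left (hC _ ⟨t, ht, rfl⟩) (norm_nonneg _)
    have hc1 : p.coeff 1 = 0 :=
      Polynomial.coeff_eq_zero_of_degree_lt (lt_of_le_of_lt hdeg (by norm_num))
    have hc1' : p.coeff 1 = φ (N x) := by
      rw [hp, Polynomial.finset_sum_coeff]
      have h1n : (1 : ℕ) ∈ Finset.range n := by simp [hn]
      rw [Finset.sum_eq_single 1]
      · simp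
      · intro k hk hk1
        simp [mul_assoc, Polynomial.coeff_C_mul, Polynomial.coeff_X_pow, Ne.symm hk1]
      · intro h; exact absurd h1n h
    rw [← hc1', hc1]
  have hpow : ∀ k, 1 ≤ k → (N ^ k) x = 0 := by
    intro k hk
    obtain ⟨j, rfl⟩ := Nat.exists_eq_add_of_le hk
    rw [add_comm, pow_add, pow_one, ContinuousLinearMap.mul_apply, hNx, map_zero]
  refine ⟨hNx, fun t => ?_⟩
  rw [hexp t, Finset.sum_eq_single 0]
  · simp
  · intro k _ hk0
    rw [hpow k (Nat.one_le_iff_ne_zero.mpr hk0), smul_zero]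
  · intro h; exact absurd (by simp [hn] : (0:ℕ) ∈ Finset.range n) h
end

section
/- Let V be a finite-dimensional real normed vector space and A a linear endomorphism of V with Jordan decomposition A = A_E + A_H + A_N into pairwise commuting elliptic, hyperbolic, and nilpotent parts. Let v ∈ ker A_H. Then the set {e^{tA} v : t ≥ 0} is bounded if and only if A_N v = 0. -/
set_option synthInstance.maxHeartbeats 1000000
set_option maxHeartbeats 1000000
set_option linter.unusedSectionVars false
set_option linter.unusedVariables false


open Bornology NormedSpace

/-- A real endomorphism is elliptic if its complexification is diagonalizable and all its
complex eigenvalues are purely imaginary. -/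
def LinearMap.IsEllipticReal {V : Type*} [AddCommGroup V] [Module ℝ V]
    (A : V →ₗ[ℝ] V) : Prop :=
  (⨆ μ : ℂ, Module.End.eigenspace (A.baseChange ℂ) μ) = ⊤ ∧
  ∀ μ : ℂ, Module.End.HasEigenvalue (A.baseChange ℂ) μ → μ.re = 0

/-- A real endomorphism is hyperbolic if its complexification is diagonalizable and all its
complex eigenvalues are real. -/
def LinearMap.IsHyperbolicReal {V : Type*} [AddCommGroup V] [Module ℝ V]
    (A : V →ₗ[ℝ] V) : Prop :=
  (⨆ μ : ℂ, Module.End.eigenspace (A.baseChange ℂ) μ) = ⊤ ∧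
  ∀ μ : ℂ, Module.End.HasEigenvalue (A.baseChange ℂ) μ → μ.im = 0

namespace BoundedOrbitAux

open Nat
open scoped TensorProduct

variable {V : Type*} [NormedAddCommGroup V] [NormedSpace ℝ V] [FiniteDimensional ℝ V]

lemma summable_exp_apply (B : V →L[ℝ] V) (x : V) :
    Summable fun n : ℕ => (n ! : ℝ)⁻¹ • (B ^ n) x := by
  have h := (expSeries_summable' (𝕂 := ℝ) B)
  have := h.map (ContinuousLinearMap.apply ℝ V x) (ContinuousLinearMap.continuous _)
  simpa [Function.comp_def] using this

lemma exp_apply_eq_tsum (B : V →L[ℝ] V) (x : V) :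
    exp B x = ∑' n : ℕ, (n ! : ℝ)⁻¹ • (B ^ n) x := by
  have h := (ContinuousLinearMap.apply ℝ V x).map_tsum (expSeries_summable' (𝕂 := ℝ) B)
  rw [exp_eq_tsum ℝ]
  simpa using h

lemma exp_apply_of_apply_eq_zero (B : V →L[ℝ] V) (x : V) (h : B x = 0) :
    exp B x = x := by
  rw [exp_apply_eq_tsum]
  rw [tsum_eq_single 0]
  · simp
  · intro n hn
    obtain ⟨m, rfl⟩ := Nat.exists_eq_succ_of_ne_zero hn
    have : (B ^ (m + 1)) x = 0 := by
      rw [pow_succ, ContinuousLinearMap.mul_apply, h, map_zero]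
    simp [this]

lemma baseChange_pow_tmul (B : V →L[ℝ] V) (n : ℕ) (x : V) :
    ((B : V →ₗ[ℝ] V).baseChange ℂ ^ n) ((1:ℂ) ⊗ₜ[ℝ] x) = (1:ℂ) ⊗ₜ[ℝ] ((B ^ n) x) := by
  induction n generalizing x with
  | zero => simp
  | succ m ih =>
      rw [pow_succ, Module.End.mul_apply, LinearMap.baseChange_tmul]
      show ((B : V →ₗ[ℝ] V).baseChange ℂ ^ m) ((1:ℂ) ⊗ₜ[ℝ] (B x)) = _
      rw [ih, pow_succ, ContinuousLinearMap.mul_apply]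

lemma eigen_pow_apply {W : Type*} [AddCommGroup W] [Module ℂ W]
    (T : Module.End ℂ W) (μ : ℂ) (w : W) (hw : w ∈ Module.End.eigenspace T μ) (n : ℕ) :
    (T ^ n) w = μ ^ n • w := by
  rcases eq_or_ne w 0 with rfl | hne
  · simp
  · exact Module.End.HasEigenvector.pow_apply ⟨hw, hne⟩ n

lemma elliptic_pointwise_bound (B : V →L[ℝ] V)
    (hB : LinearMap.IsEllipticReal (B : V →ₗ[ℝ] V)) (x : V) :
    ∃ C : ℝ, ∀ t : ℝ, ‖exp (t • B) x‖ ≤ C := by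
  classical
  obtain ⟨hdiag, him⟩ := hB
  set Bc := (B : V →ₗ[ℝ] V).baseChange ℂ with hBcdef
  have hx : (1 : ℂ) ⊗ₜ[ℝ] x ∈ ⨆ μ : ℂ, Module.End.eigenspace Bc μ := by
    rw [hdiag]; exact Submodule.mem_top
  rw [Submodule.mem_iSup_iff_exists_finsupp] at hx
  obtain ⟨f, hf, hfsum⟩ := hx
  set b := Module.finBasis ℝ V with hbdef
  set bc := Algebra.TensorProduct.basis ℂ b with hbcdef
  set G : Fin (Module.finrank ℝ V) → V →ₗ[ℝ] ℂ := fun i =>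
    ((bc.coord i).restrictScalars ℝ).comp ((TensorProduct.mk ℝ ℂ V) 1) with hGdef
  have hG : ∀ i y, G i y = bc.coord i ((1:ℂ) ⊗ₜ[ℝ] y) := fun i y => rfl
  have key : ∀ i (t : ℝ), G i (exp (t • B) x)
      = ∑ μ ∈ f.support, Complex.exp (t * μ) * bc.coord i (f μ) := by
    intro i t
    have hcont : Continuous (G i) := (G i).continuous_of_finiteDimensional
    let Gc : V →L[ℝ] ℂ := ⟨G i, hcont⟩
    have h2 : G i (exp (t • B) x) = ∑' n : ℕ, G i ((n ! : ℝ)⁻¹ • ((t • B) ^ n) x) := by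
      rw [exp_apply_eq_tsum]
      exact Gc.map_tsum (summable_exp_apply _ _)
    have h3 : ∀ n : ℕ, G i ((n ! : ℝ)⁻¹ • ((t • B) ^ n) x)
        = ∑ μ ∈ f.support, ((n ! : ℂ))⁻¹ * ((t : ℂ) * μ) ^ n * bc.coord i (f μ) := by
      intro n
      have e1 : ((t • B) ^ n) x = t ^ n • (B ^ n) x := by
        have : (t • B) ^ n = t ^ n • B ^ n := smul_pow t B n
        rw [this]; simp
      have e2 : (1:ℂ) ⊗ₜ[ℝ] ((B ^ n) x) = ∑ μ ∈ f.support, μ ^ n • f μ := by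
        rw [← baseChange_pow_tmul]
        have hsum' : (1 : ℂ) ⊗ₜ[ℝ] x = ∑ μ ∈ f.support, f μ := by
          rw [← hfsum]; rfl
        rw [hsum', map_sum]
        exact Finset.sum_congr rfl fun μ hμ => eigen_pow_apply _ _ _ (hf μ) n
      rw [map_smul, e1, map_smul, hG, e2, map_sum]
      rw [Finset.smul_sum, Finset.smul_sum]
      refine Finset.sum_congr rfl fun μ hμ => ?_
      rw [map_smul]
      rw [smul_eq_mul]
      rw [Complex.real_smul, Complex.real_smul]
      push_cast
      ring
    rw [h2]
    rw [tsum_congr h3]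
    rw [Summable.tsum_finsetSum (fun μ hμ => ?_)]
    · refine Finset.sum_congr rfl fun μ hμ => ?_
      rw [tsum_mul_right]
      congr 1
      rw [Complex.exp_eq_exp_ℂ, exp_eq_tsum ℂ]
      exact tsum_congr fun n => by rw [smul_eq_mul]
    · have := (expSeries_summable' (𝕂 := ℂ) ((t : ℂ) * μ))
      simp only [smul_eq_mul] at this
      exact this.mul_right _
  have coordBound : ∀ i (t : ℝ),
      ‖G i (exp (t • B) x)‖ ≤ ∑ μ ∈ f.support, ‖bc.coord i (f μ)‖ := by
    intro i t
    rw [key i t]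
    refine (norm_sum_le _ _).trans ?_
    refine Finset.sum_le_sum fun μ hμ => ?_
    rw [norm_mul]
    have hμ0 : μ.re = 0 := by
      refine him μ (Module.End.hasEigenvalue_of_hasEigenvector (x := f μ) ⟨hf μ, ?_⟩)
      exact Finsupp.mem_support_iff.mp hμ
    have : ‖Complex.exp ((t : ℂ) * μ)‖ = 1 := by
      rw [Complex.norm_exp]
      simp [Complex.mul_re, hμ0]
    rw [this, one_mul]
  refine ⟨∑ i, (∑ μ ∈ f.support, ‖bc.coord i (f μ)‖) * ‖b i‖, fun t => ?_⟩
  set y := exp (t • B) x with hy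
  have hrepr : ∀ i, ‖b.repr y i‖ ≤ ∑ μ ∈ f.support, ‖bc.coord i (f μ)‖ := by
    intro i
    have hcoord : G i y = ((b.repr y i : ℝ) : ℂ) := by
      rw [hG]
      show (Algebra.TensorProduct.basis ℂ b).repr ((1:ℂ) ⊗ₜ[ℝ] y) i = _
      rw [Algebra.TensorProduct.basis_repr_tmul]
      simp
    have h := coordBound i t
    rw [← hy, hcoord] at h
    simpa using h
  calc ‖y‖ = ‖∑ i, b.repr y i • b i‖ := by rw [b.sum_repr y]
    _ ≤ ∑ i, ‖b.repr y i • b i‖ := norm_sum_le _ _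
    _ ≤ ∑ i, (∑ μ ∈ f.support, ‖bc.coord i (f μ)‖) * ‖b i‖ := by
        refine Finset.sum_le_sum fun i _ => ?_
        rw [norm_smul]
        exact mul_le_mul_of_nonneg_right (hrepr i) (norm_nonneg _)

lemma commute_smul_smul {X Y : V →L[ℝ] V} (h : Commute X Y) (s u : ℝ) :
    Commute (s • X) (u • Y) := (h.smul_left s).smul_right u

end BoundedOrbitAux

open BoundedOrbitAux Nat

/-- Let `A = A_E + A_H + A_N` be the Jordan decomposition of a linear
endomorphism `A` of a finite-dimensional real normed vector space `V`, into pairwise commuting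
elliptic, hyperbolic and nilpotent parts.  For `v ∈ ker A_H`, the set `{e^{tA} v : t ≥ 0}` is
bounded if and only if `A_N v = 0`. -/
theorem bounded_orbit_iff_nilpotent_part_vanishes
    {V : Type*} [NormedAddCommGroup V] [NormedSpace ℝ V] [FiniteDimensional ℝ V]
    (A AE AH AN : V →L[ℝ] V)
    (hsum : A = AE + AH + AN)
    (hEH : Commute AE AH) (hEN : Commute AE AN) (hHN : Commute AH AN)
    (hE : (AE : V →ₗ[ℝ] V).IsEllipticReal)
    (hH : (AH : V →ₗ[ℝ] V).IsHyperbolicReal)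
    (hN : IsNilpotent AN)
    (v : V) (hv : AH v = 0) :
    IsBounded {y : V | ∃ t : ℝ, 0 ≤ t ∧ y = exp (t • A) v} ↔ AN v = 0 := by
  classical
  have hsplit : ∀ t : ℝ, exp (t • A) v = exp (t • AE) (exp (t • AN) v) := by
    intro t
    have hA : t • A = (t • AE + t • AN) + t • AH := by
      rw [hsum, smul_add, smul_add]; abel
    have c1 : Commute (t • AE) (t • AN) := commute_smul_smul hEN t t
    have c2 : Commute (t • AE + t • AN) (t • AH) :=
      (commute_smul_smul hEH t t).add_left (commute_smul_smul hHN.symm t t)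
    have h0 : (t • AH) v = 0 := by
      rw [ContinuousLinearMap.smul_apply, hv, smul_zero]
    rw [hA, exp_add_of_commute_of_mem_ball (𝕂 := ℝ) c2 ((expSeries_radius_eq_top ℝ (V →L[ℝ] V)).symm ▸ edist_lt_top _ _) ((expSeries_radius_eq_top ℝ (V →L[ℝ] V)).symm ▸ edist_lt_top _ _), exp_add_of_commute_of_mem_ball (𝕂 := ℝ) c1 ((expSeries_radius_eq_top ℝ (V →L[ℝ] V)).symm ▸ edist_lt_top _ _) ((expSeries_radius_eq_top ℝ (V →L[ℝ] V)).symm ▸ edist_lt_top _ _),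
      ContinuousLinearMap.mul_apply, ContinuousLinearMap.mul_apply,
      exp_apply_of_apply_eq_zero _ _ h0]
  constructor
  · -- bounded → AN v = 0
    intro hbdd
    obtain ⟨R', hR'⟩ := isBounded_iff_forall_norm_le.mp hbdd
    set R := max R' 0 with hRdef
    have hR : ∀ t : ℝ, 0 ≤ t → ‖exp (t • A) v‖ ≤ R := fun t ht =>
      le_trans (hR' _ ⟨t, ht, rfl⟩) (le_max_left _ _)
    have hR0 : (0:ℝ) ≤ R := le_max_right _ _
    obtain ⟨C', hC'⟩ := banach_steinhaus (g := fun t : ℝ => exp (t • AE))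
      (fun x => elliptic_pointwise_bound AE hE x)
    set C := max C' 0 with hCdef
    have hC : ∀ t : ℝ, ‖exp (t • AE)‖ ≤ C := fun t => le_trans (hC' t) (le_max_left _ _)
    have hC0 : (0:ℝ) ≤ C := le_max_right _ _
    have hNbound : ∀ t : ℝ, 0 ≤ t → ‖exp (t • AN) v‖ ≤ C * R := by
      intro t ht
      have hone : exp ((-t) • AE) * exp (t • AE) = 1 := by
        rw [← exp_add_of_commute_of_mem_ball (𝕂 := ℝ) (commute_smul_smul (Commute.refl AE) (-t) t) ((expSeries_radius_eq_top ℝ (V →L[ℝ] V)).symm ▸ edist_lt_top _ _) ((expSeries_radius_eq_top ℝ (V →L[ℝ] V)).symm ▸ edist_lt_top _ _),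
          show (-t) • AE + t • AE = (0 : V →L[ℝ] V) by rw [← add_smul]; simp]
        exact exp_zero
      have hinv : exp ((-t) • AE) (exp (t • A) v) = exp (t • AN) v := by
        rw [hsplit t, ← ContinuousLinearMap.mul_apply, hone, ContinuousLinearMap.one_apply]
      rw [← hinv]
      calc ‖exp ((-t) • AE) (exp (t • A) v)‖
          ≤ ‖exp ((-t) • AE)‖ * ‖exp (t • A) v‖ := ContinuousLinearMap.le_opNorm _ _
        _ ≤ C * R := mul_le_mul (hC _) (hR t ht) (norm_nonneg _) hC0
    by_contra hANv
    obtain ⟨m, hm⟩ := hN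
    have hkex : ∃ n, (AN ^ (n+1)) v = 0 := ⟨m, by simp [pow_succ, hm]⟩
    set k := Nat.find hkex with hkdef
    have hk : (AN ^ (k+1)) v = 0 := Nat.find_spec hkex
    have hkpos : 1 ≤ k := by
      rcases Nat.eq_zero_or_pos k with h0 | h
      · exfalso
        apply hANv
        have := hk
        rw [h0] at this
        simpa using this
      · exact h
    have hwne : (AN ^ k) v ≠ 0 := by
      obtain ⟨j, hj⟩ : ∃ j, k = j + 1 := ⟨k - 1, by omega⟩
      rw [hj]
      exact Nat.find_min hkex (by omega)
    set w := (AN ^ k) v with hwdef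
    have hvanish : ∀ n, k + 1 ≤ n → (AN ^ n) v = 0 := by
      intro n hn
      obtain ⟨d, rfl⟩ := Nat.exists_eq_add_of_le hn
      rw [add_comm, pow_add, ContinuousLinearMap.mul_apply, hk, map_zero]
    have hpoly : ∀ t : ℝ, exp (t • AN) v
        = ∑ n ∈ Finset.range (k+1), ((n ! : ℝ)⁻¹ * t ^ n) • (AN ^ n) v := by
      intro t
      rw [exp_apply_eq_tsum]
      rw [tsum_eq_sum (s := Finset.range (k+1)) ?_]
      · refine Finset.sum_congr rfl fun n _ => ?_
        rw [show (t • AN) ^ n = t ^ n • AN ^ n from smul_pow t AN n,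
          ContinuousLinearMap.smul_apply, smul_smul]
      · intro n hn
        have hn' : k + 1 ≤ n := by
          by_contra hlt
          exact hn (Finset.mem_range.mpr (by omega))
        rw [show (t • AN) ^ n = t ^ n • AN ^ n from smul_pow t AN n,
          ContinuousLinearMap.smul_apply, hvanish n hn']
        simp
    set D := ∑ n ∈ Finset.range k, (n ! : ℝ)⁻¹ * ‖(AN ^ n) v‖ with hDdef
    have hD0 : 0 ≤ D := Finset.sum_nonneg fun n _ => by positivity
    have hwpos : 0 < ‖w‖ := norm_pos_iff.mpr hwne
    set t := max 1 ((D + C * R + 1) * k ! / ‖w‖) with htdef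
    have ht1 : (1:ℝ) ≤ t := le_max_left _ _
    have ht0 : (0:ℝ) ≤ t := le_trans zero_le_one ht1
    have htw : (D + C * R + 1) * (k ! : ℝ) ≤ t * ‖w‖ :=
      (div_le_iff₀ hwpos).mp (le_max_right _ _)
    have hmain := hNbound t ht0
    rw [hpoly t, Finset.sum_range_succ] at hmain
    set S := ∑ n ∈ Finset.range k, ((n ! : ℝ)⁻¹ * t ^ n) • (AN ^ n) v with hSdef
    -- lower bound for the last term
    have hlast : ‖((k ! : ℝ)⁻¹ * t ^ k) • w‖ = (k ! : ℝ)⁻¹ * t ^ k * ‖w‖ := by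
      rw [norm_smul]
      have : |(k ! : ℝ)⁻¹ * t ^ k| = (k ! : ℝ)⁻¹ * t ^ k := by
        apply abs_of_nonneg
        positivity
      rw [Real.norm_eq_abs, this]
    have hSle : ‖S‖ ≤ t ^ (k-1) * D := by
      rw [hSdef, hDdef, Finset.mul_sum]
      refine (norm_sum_le _ _).trans (Finset.sum_le_sum fun n hn => ?_)
      rw [norm_smul, Real.norm_eq_abs, abs_of_nonneg (by positivity)]
      have htn : t ^ n ≤ t ^ (k-1) :=
        pow_le_pow_right₀ ht1 (by have := Finset.mem_range.mp hn; omega)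
      calc (n ! : ℝ)⁻¹ * t ^ n * ‖(AN ^ n) v‖
          ≤ (n ! : ℝ)⁻¹ * t ^ (k-1) * ‖(AN ^ n) v‖ := by
            have h1 : (0:ℝ) ≤ (n ! : ℝ)⁻¹ := by positivity
            exact mul_le_mul_of_nonneg_right
              (mul_le_mul_of_nonneg_left htn h1) (norm_nonneg _)
        _ = t ^ (k-1) * ((n ! : ℝ)⁻¹ * ‖(AN ^ n) v‖) := by ring
    have htri : ‖((k ! : ℝ)⁻¹ * t ^ k) • w‖ - ‖S‖ ≤ ‖S + ((k ! : ℝ)⁻¹ * t ^ k) • w‖ := by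
      have := norm_sub_norm_le (((k ! : ℝ)⁻¹ * t ^ k) • w) (-S)
      rw [norm_neg, sub_neg_eq_add, add_comm] at this
      exact this
    have hA1 : (k ! : ℝ)⁻¹ * t ^ k * ‖w‖ ≤ C * R + t ^ (k-1) * D := by
      have := le_trans htri hmain
      rw [hlast] at this
      linarith [hSle]
    have hkfac : (0:ℝ) < (k ! : ℝ) := by positivity
    have hA2 : D + C * R + 1 ≤ (k ! : ℝ)⁻¹ * (t * ‖w‖) := by
      rw [le_inv_mul_iff₀ hkfac]
      linarith [htw]
    have hs1 : (1:ℝ) ≤ t ^ (k-1) := one_le_pow₀ ht1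
    have hek : t ^ k = t ^ (k-1) * t := by
      conv_lhs => rw [show k = (k-1)+1 by omega]
      rw [pow_succ]
    have hA3 : t ^ (k-1) * (D + C * R + 1) ≤ C * R + t ^ (k-1) * D := by
      calc t ^ (k-1) * (D + C * R + 1)
          ≤ t ^ (k-1) * ((k ! : ℝ)⁻¹ * (t * ‖w‖)) := by
            apply mul_le_mul_of_nonneg_left hA2 (by positivity)
        _ = (k ! : ℝ)⁻¹ * t ^ k * ‖w‖ := by rw [hek]; ring
        _ ≤ C * R + t ^ (k-1) * D := hA1
    nlinarith [mul_nonneg hC0 hR0, hs1, hA3]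
  · -- AN v = 0 → bounded
    intro hANv
    obtain ⟨C, hC⟩ := elliptic_pointwise_bound AE hE v
    rw [isBounded_iff_forall_norm_le]
    refine ⟨C, ?_⟩
    rintro y ⟨t, ht, rfl⟩
    have hfix : exp (t • AN) v = v := exp_apply_of_apply_eq_zero _ _ (by
      rw [ContinuousLinearMap.smul_apply, hANv, smul_zero])
    rw [hsplit t, hfix]
    exact hC t
end

section
/- Let V be a finite-dimensional real normed vector space and A a linear endomorphism of V. Let V⁻ (respectively V⁺) be the sum of the real generalized eigenspaces of A corresponding to the complex eigenvalues of A with negative (respectively positive) real part. Then V⁻ = {v ∈ V : e^{tA} v → 0 as t → +∞} and V⁺ = {v ∈ V : e^{tA} v → 0 as t → −∞}. -/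
open Filter NormedSpace TensorProduct Topology

set_option linter.unusedSectionVars false
set_option maxHeartbeats 1000000

section ExpHelpers

variable {𝕂 : Type*} [RCLike 𝕂] {X : Type*} [NormedAddCommGroup X] [NormedSpace 𝕂 X]
  [CompleteSpace X]

private lemma myExp_apply_hasSum (M : X →L[𝕂] X) (w : X) :
    HasSum (fun n : ℕ => ((Nat.factorial n : 𝕂))⁻¹ • (M ^ n) w) (exp M w) := by
  have h := (exp_series_hasSum_exp' (𝕂 := 𝕂) M).mapL (ContinuousLinearMap.apply 𝕂 X w)
  simpa using h

private lemma myExp_commute {Y : Type*} [NormedAddCommGroup Y] [NormedSpace 𝕂 Y]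
    [CompleteSpace Y] (f : X →L[𝕂] Y) (M : X →L[𝕂] X) (M' : Y →L[𝕂] Y)
    (h : ∀ u : X, f (M u) = M' (f u)) (u : X) :
    f (exp M u) = exp M' (f u) := by
  have hpow : ∀ (n : ℕ) (x : X), f ((M ^ n) x) = (M' ^ n) (f x) := by
    intro n
    induction n with
    | zero => intro x; rfl
    | succ n ih =>
      intro x
      rw [pow_succ, pow_succ, ContinuousLinearMap.mul_apply, ContinuousLinearMap.mul_apply,
        ih (M x), h x]
  have h1 := (myExp_apply_hasSum M u).mapL f
  have h2 : HasSum (fun n : ℕ => ((Nat.factorial n : 𝕂))⁻¹ • (M' ^ n) (f u))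
      (f (exp M u)) := by
    refine h1.congr_fun fun n => ?_
    rw [map_smul, hpow n u]
  exact h2.unique (myExp_apply_hasSum M' (f u))

end ExpHelpers

section RestrictScalars

variable {W : Type*} [NormedAddCommGroup W] [NormedSpace ℂ W] [NormedSpace ℝ W]
  [IsScalarTower ℝ ℂ W] [CompleteSpace W]

private lemma myRestrict_pow_apply (C : W →L[ℂ] W) (n : ℕ) (w : W) :
    ((C.restrictScalars ℝ) ^ n) w = (C ^ n) w := by
  induction n generalizing w with
  | zero => rfl
  | succ n ih =>
    rw [pow_succ, pow_succ, ContinuousLinearMap.mul_apply, ContinuousLinearMap.mul_apply]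
    exact ih (C w)

private lemma myExp_restrict (C : W →L[ℂ] W) (w : W) :
    exp (C.restrictScalars ℝ) w = exp C w := by
  refine (myExp_apply_hasSum (C.restrictScalars ℝ) w).unique ?_
  have h2 := myExp_apply_hasSum (𝕂 := ℂ) C w
  refine HasSum.congr_fun h2 fun n => ?_
  rw [myRestrict_pow_apply]
  rw [show ((Nat.factorial n : ℝ))⁻¹ • (C ^ n) w
      = ((Nat.factorial n : ℝ) : ℂ)⁻¹ • (C ^ n) w by
    rw [← Complex.coe_algebraMap, ← map_inv₀, algebraMap_smul]]
  norm_num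

end RestrictScalars

section ComplexCore

variable {W : Type*} [NormedAddCommGroup W] [NormedSpace ℂ W] [CompleteSpace W]

private lemma myExp_eigenvector {B : W →L[ℂ] W} {μ : ℂ} {x : W} (hx : B x = μ • x) (z : ℂ) :
    exp (z • B) x = exp (z * μ) • x := by
  have hpow : ∀ n : ℕ, ((z • B) ^ n) x = (z * μ) ^ n • x := by
    intro n
    induction n with
    | zero => simp
    | succ n ih =>
      rw [pow_succ, ContinuousLinearMap.mul_apply, ContinuousLinearMap.smul_apply, hx,
        map_smul, map_smul, ih, pow_succ, smul_smul, smul_smul]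
      ring_nf
  have h2 : HasSum (fun n : ℕ => ((Nat.factorial n : ℂ))⁻¹ • (z * μ) ^ n • x)
      (exp (z * μ) • x) := by
    have := (exp_series_hasSum_exp' (𝕂 := ℂ) (z * μ)).smul_const x
    refine this.congr_fun fun n => ?_
    rw [smul_assoc]
  refine (myExp_apply_hasSum (z • B) x).unique ?_
  exact h2.congr_fun fun n => by rw [hpow n]

private lemma myExp_nilpotent {N : W →L[ℂ] W} {x : W} {m : ℕ} (h : (N ^ m) x = 0) (z : ℂ) :
    exp (z • N) x
      = ∑ k ∈ Finset.range m, (((Nat.factorial k : ℂ))⁻¹ * z ^ k) • (N ^ k) x := by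
  have hz : ∀ n : ℕ, ((z • N) ^ n) x = z ^ n • (N ^ n) x := by
    intro n; rw [smul_pow]; rfl
  have hvan : ∀ n ∉ Finset.range m,
      ((Nat.factorial n : ℂ))⁻¹ • ((z • N) ^ n) x = 0 := by
    intro n hn
    rw [Finset.mem_range, not_lt] at hn
    have hNn : (N ^ n) x = 0 := by
      have hpow : N ^ n = N ^ (n - m) * N ^ m := by
        rw [← pow_add]; congr 1; omega
      rw [hpow, ContinuousLinearMap.mul_apply, h, map_zero]
    rw [hz, hNn, smul_zero, smul_zero]
  have h2 := hasSum_sum_of_ne_finset_zero (L := SummationFilter.unconditional ℕ) hvan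
  rw [(myExp_apply_hasSum (z • N) x).unique h2]
  refine Finset.sum_congr rfl fun k _ => ?_
  rw [hz, smul_smul]

private lemma myExp_split (B : W →L[ℂ] W) (μ : ℂ) (z : ℂ) (x : W) :
    exp (z • B) x = exp (z * μ) • exp (z • (B - μ • 1)) x := by
  have hdecomp : z • B = (z * μ) • (1 : W →L[ℂ] W) + z • (B - μ • 1) := by
    rw [smul_sub, mul_smul, ← smul_assoc]
    simp [smul_smul]
  have hcomm : Commute ((z * μ) • (1 : W →L[ℂ] W)) (z • (B - μ • 1)) :=
    ((Commute.one_left _).smul_left _)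
  letI : NormedAlgebra ℚ (W →L[ℂ] W) := NormedAlgebra.restrictScalars ℚ ℂ _
  rw [hdecomp, exp_add_of_commute hcomm]
  have h1 : exp ((z * μ) • (1 : W →L[ℂ] W)) = exp (z * μ) • (1 : W →L[ℂ] W) := by
    rw [← Algebra.algebraMap_eq_smul_one, ← Algebra.algebraMap_eq_smul_one,
      map_exp (algebraMap ℂ (W →L[ℂ] W)) (continuous_algebraMap _ _)]
  rw [h1, ContinuousLinearMap.mul_apply]
  simp

private lemma myCoe_pow_apply (M : W →L[ℂ] W) (n : ℕ) (x : W) :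
    ((M : W →ₗ[ℂ] W) ^ n) x = (M ^ n) x := by
  induction n generalizing x with
  | zero => rfl
  | succ n ih =>
    rw [pow_succ, pow_succ, Module.End.mul_apply, ContinuousLinearMap.mul_apply]
    exact ih (M x)

private lemma myEnd_sub_pow_apply (B : W →L[ℂ] W) (μ : ℂ) (n : ℕ) (x : W) :
    (((B : W →ₗ[ℂ] W) - μ • 1) ^ n) x = ((B - μ • 1) ^ n) x := by
  have h : ((B : W →ₗ[ℂ] W) - μ • 1) = ((B - μ • 1 : W →L[ℂ] W) : W →ₗ[ℂ] W) := by
    ext w; simp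
  rw [h, myCoe_pow_apply]

private lemma tendsto_pow_exp_aux {c : ℝ} (hc : c < 0) (k : ℕ) :
    Tendsto (fun t : ℝ => t ^ k * Real.exp (c * t)) atTop (𝓝 0) := by
  have h := tendsto_rpow_mul_exp_neg_mul_atTop_nhds_zero (k : ℝ) (-c) (by linarith)
  refine h.congr fun t => ?_
  rw [Real.rpow_natCast, neg_neg]

private lemma myNorm_exp_complex (c : ℂ) : ‖exp c‖ = Real.exp c.re := by
  rw [← Complex.exp_eq_exp_ℂ]
  exact Complex.norm_exp c

private lemma myDecay {B : W →L[ℂ] W} {μ : ℂ} (hμ : μ.re < 0) {x : W}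
    (hx : ∃ m : ℕ, (((B : W →ₗ[ℂ] W) - μ • 1) ^ m) x = 0) :
    Tendsto (fun t : ℝ => exp ((t : ℂ) • B) x) atTop (𝓝 0) := by
  obtain ⟨m, hm⟩ := hx
  rw [myEnd_sub_pow_apply] at hm
  set N : W →L[ℂ] W := B - μ • 1 with hN
  have key : ∀ t : ℝ, exp ((t : ℂ) • B) x
      = exp ((t : ℂ) * μ) •
        ∑ k ∈ Finset.range m, (((Nat.factorial k : ℂ))⁻¹ * (t : ℂ) ^ k) • (N ^ k) x := by
    intro t
    rw [myExp_split B μ (t : ℂ) x, myExp_nilpotent hm]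
  set g : ℝ → ℝ := fun t =>
    ∑ k ∈ Finset.range m, ((Nat.factorial k : ℝ))⁻¹ * ‖(N ^ k) x‖ *
      (t ^ k * Real.exp (μ.re * t)) with hg
  have hbound : ∀ᶠ t : ℝ in atTop, ‖exp ((t : ℂ) • B) x‖ ≤ g t := by
    filter_upwards [eventually_ge_atTop (0 : ℝ)] with t ht
    rw [key t, norm_smul, myNorm_exp_complex]
    have hre : ((t : ℂ) * μ).re = μ.re * t := by
      simp [Complex.mul_re]; ring
    rw [hre, hg]
    calc Real.exp (μ.re * t) * ‖∑ k ∈ Finset.range m,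
          (((Nat.factorial k : ℂ))⁻¹ * (t : ℂ) ^ k) • (N ^ k) x‖
        ≤ Real.exp (μ.re * t) * ∑ k ∈ Finset.range m,
          ‖(((Nat.factorial k : ℂ))⁻¹ * (t : ℂ) ^ k) • (N ^ k) x‖ :=
          mul_le_mul_of_nonneg_left (norm_sum_le _ _) (Real.exp_nonneg _)
      _ = ∑ k ∈ Finset.range m, ((Nat.factorial k : ℝ))⁻¹ * ‖(N ^ k) x‖ *
          (t ^ k * Real.exp (μ.re * t)) := by
          rw [Finset.mul_sum]
          refine Finset.sum_congr rfl fun k _ => ?_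
          rw [norm_smul, norm_mul, norm_pow]
          have h1 : ‖((Nat.factorial k : ℂ))⁻¹‖ = ((Nat.factorial k : ℝ))⁻¹ := by
            rw [norm_inv]; simp
          have h2 : ‖(t : ℂ)‖ = t := by
            rw [Complex.norm_real, Real.norm_of_nonneg ht]
          rw [h1, h2]
          ring
  have hgto : Tendsto g atTop (𝓝 0) := by
    rw [hg]
    have h3 : Tendsto (fun t : ℝ => ∑ k ∈ Finset.range m,
        ((Nat.factorial k : ℝ))⁻¹ * ‖(N ^ k) x‖ * (t ^ k * Real.exp (μ.re * t))) atTop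
        (𝓝 (∑ _k ∈ Finset.range m, (0 : ℝ))) := by
      refine tendsto_finset_sum _ fun k _ => ?_
      have := (tendsto_pow_exp_aux hμ k).const_mul (((Nat.factorial k : ℝ))⁻¹ * ‖(N ^ k) x‖)
      simpa using this
    simpa using h3
  exact squeeze_zero_norm' hbound hgto

end ComplexCore

section CoreTheorem

variable {W : Type*} [NormedAddCommGroup W] [NormedSpace ℂ W] [FiniteDimensional ℂ W]

/-- The subspace of vectors decaying under `exp (t B)` as `t → ∞`. -/
private def myDecaySet (B : W →L[ℂ] W) : Submodule ℂ W where
  carrier := {x | Tendsto (fun t : ℝ => exp ((t : ℂ) • B) x) atTop (𝓝 0)}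
  add_mem' := fun hx hy => by simpa [map_add] using hx.add hy
  zero_mem' := by simpa [map_zero] using (tendsto_const_nhds :
    Tendsto (fun _ : ℝ => (0 : W)) atTop (𝓝 0))
  smul_mem' := fun c x hx => by simpa [map_smul] using hx.const_smul c

private lemma mem_myDecaySet {B : W →L[ℂ] W} {x : W} :
    x ∈ myDecaySet B ↔ Tendsto (fun t : ℝ => exp ((t : ℂ) • B) x) atTop (𝓝 0) :=
  Iff.rfl

private theorem myCore (B : W →L[ℂ] W) (x : W) :
    x ∈ (⨆ μ : ℂ, ⨆ _ : μ.re < 0, Module.End.maxGenEigenspace (B : W →ₗ[ℂ] W) μ) ↔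
    Tendsto (fun t : ℝ => exp ((t : ℂ) • B) x) atTop (𝓝 0) := by
  constructor
  · intro hx
    refine (iSup_le fun μ => iSup_le fun hμ => fun y hy => ?_ :
      _ ≤ myDecaySet B) hx
    rw [Module.End.mem_maxGenEigenspace] at hy
    exact myDecay hμ hy
  · intro hx
    set L : Submodule ℂ W := myDecaySet B with hL
    have hLinv : ∀ y : W, y ∈ L → (B : W →ₗ[ℂ] W) y ∈ L := by
      intro y hy
      rw [hL, mem_myDecaySet] at hy ⊢
      have hcomm : ∀ t : ℝ, exp ((t : ℂ) • B) (B y) = B (exp ((t : ℂ) • B) y) := by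
        intro t
        have h : Commute ((t : ℂ) • B) B := (Commute.refl B).smul_left _
        have h2 := h.exp_left
        calc exp ((t : ℂ) • B) (B y) = (exp ((t : ℂ) • B) * B) y := rfl
          _ = (B * exp ((t : ℂ) • B)) y := by rw [h2.eq]
          _ = B (exp ((t : ℂ) • B) y) := rfl
      have h4 := (B.continuous.tendsto 0).comp hy
      simp only [Function.comp_def, map_zero] at h4
      exact Tendsto.congr (fun t => (hcomm t).symm) h4
    set B' : Module.End ℂ L := LinearMap.restrict (B : W →ₗ[ℂ] W) hLinv with hB'
    have heig : ∀ μ : ℂ, Module.End.maxGenEigenspace B' μ ≠ ⊥ → μ.re < 0 := by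
      intro μ hne
      by_contra h
      push_neg at h
      have h1 : B'.HasUnifEigenvalue μ 1 :=
        Module.End.HasUnifEigenvalue.lt zero_lt_one hne
      obtain ⟨v, hv⟩ := h1.exists_hasUnifEigenvector
      have hv0 : (v : W) ≠ 0 := fun hz => hv.2 (by exact_mod_cast Subtype.ext hz)
      have hBv : B (v : W) = μ • (v : W) := by
        have h5 := hv.1
        rw [Module.End.mem_genEigenspace_one] at h5
        have h3 := congrArg (Subtype.val) h5
        rw [hB'] at h3
        simpa [LinearMap.restrict_apply] using h3
      have hvL : Tendsto (fun t : ℝ => exp ((t : ℂ) • B) (v : W)) atTop (𝓝 0) :=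
        v.2
      have hnorm : ∀ t : ℝ, 0 ≤ t →
          ‖(v : W)‖ ≤ ‖exp ((t : ℂ) • B) (v : W)‖ := by
        intro t ht
        rw [myExp_eigenvector hBv, norm_smul, myNorm_exp_complex]
        have hre : ((t : ℂ) * μ).re = t * μ.re := by simp [Complex.mul_re]
        rw [hre]
        nth_rewrite 1 [show ‖(v : W)‖ = 1 * ‖(v : W)‖ by ring]
        apply mul_le_mul_of_nonneg_right _ (norm_nonneg _)
        rw [← Real.exp_zero]
        exact Real.exp_le_exp.mpr (by positivity)
      have hlt : ∀ᶠ t : ℝ in atTop, ‖exp ((t : ℂ) • B) (v : W)‖ < ‖(v : W)‖ := by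
        have h6 := hvL.norm
        simp only [norm_zero] at h6
        exact h6.eventually_lt_const (norm_pos_iff.mpr hv0) |>.mono fun t ht => ht
      obtain ⟨t, ht0, htlt⟩ := ((eventually_ge_atTop (0 : ℝ)).and hlt).exists
      exact absurd (hnorm t ht0) (not_le.mpr htlt)
    have hmem : x ∈ Submodule.map L.subtype
        (⨆ μ : ℂ, Module.End.maxGenEigenspace B' μ) := by
      rw [Module.End.iSup_maxGenEigenspace_eq_top B']
      exact ⟨⟨x, hx⟩, Submodule.mem_top, rfl⟩
    rw [Submodule.map_iSup] at hmem
    have hsup : (⨆ μ : ℂ, Submodule.map L.subtype (Module.End.maxGenEigenspace B' μ))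
        ≤ ⨆ μ : ℂ, ⨆ _ : μ.re < 0, Module.End.maxGenEigenspace (B : W →ₗ[ℂ] W) μ := by
      refine iSup_le fun μ => ?_
      by_cases hμ : μ.re < 0
      · have h1 : Submodule.map L.subtype (Module.End.maxGenEigenspace B' μ)
            ≤ Module.End.maxGenEigenspace (B : W →ₗ[ℂ] W) μ := by
          rw [hB', ← Submodule.inf_genEigenspace _ _ hLinv]
          exact inf_le_right
        exact h1.trans (le_iSup₂ (f := fun μ (_ : μ.re < 0) =>
          Module.End.maxGenEigenspace (B : W →ₗ[ℂ] W) μ) μ hμ)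
      · have h2 : Module.End.maxGenEigenspace B' μ = ⊥ := by
          by_contra h
          exact hμ (heig μ h)
        simp [h2]
    exact hsup hmem

end CoreTheorem

section Algebraic

variable {M : Type*} [AddCommGroup M] [Module ℂ M]

private lemma myMaxGen_neg (f : Module.End ℂ M) (μ : ℂ) :
    Module.End.maxGenEigenspace (-f) μ = Module.End.maxGenEigenspace f (-μ) := by
  ext x
  rw [Module.End.mem_maxGenEigenspace, Module.End.mem_maxGenEigenspace]
  have key : (-f - μ • (1 : Module.End ℂ M)) = (-1 : ℂ) • (f - (-μ) • 1) := by
    simp [smul_sub, neg_smul, smul_smul]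
    abel
  constructor <;> rintro ⟨k, hk⟩ <;> refine ⟨k, ?_⟩
  · rw [key, smul_pow] at hk
    simpa [smul_eq_zero, pow_ne_zero] using hk
  · rw [key, smul_pow]
    simp only [neg_smul, sub_neg_eq_add] at hk
    simp [hk]

private lemma mySup_reindex (p : ℂ → Submodule ℂ M) :
    (⨆ μ : ℂ, ⨆ _ : μ.re < 0, p (-μ)) = ⨆ ν : ℂ, ⨆ _ : 0 < ν.re, p ν := by
  apply le_antisymm
  · refine iSup_le fun μ => iSup_le fun hμ => ?_
    have h : 0 < (-μ).re := by simp [Complex.neg_re]; linarith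
    exact le_iSup₂ (f := fun ν (_ : 0 < ν.re) => p ν) (-μ) h
  · refine iSup_le fun ν => iSup_le fun hν => ?_
    have h : (-ν).re < 0 := by simp [Complex.neg_re]; linarith
    have h2 : p ν = p (- - ν) := by rw [neg_neg]
    rw [h2]
    exact le_iSup₂ (f := fun μ (_ : μ.re < 0) => p (-μ)) (-ν) h

end Algebraic

private lemma myAtBot_iff {X : Type*} [TopologicalSpace X] (f : ℝ → X) (x : X) :
    Tendsto f atBot (𝓝 x) ↔ Tendsto (fun t : ℝ => f (-t)) atTop (𝓝 x) := by
  constructor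
  · intro h
    exact h.comp tendsto_neg_atTop_atBot
  · intro h
    have h2 := h.comp tendsto_neg_atBot_atTop
    simpa [Function.comp_def] using h2

/-- Let `V` be a finite-dimensional real normed vector space and `A` a linear
endomorphism of `V`.  A vector `v` lies in `V⁻` (the sum of the real generalized eigenspaces of
`A` for eigenvalues with negative real part, expressed via the complexification) if and only if
`e^{tA} v → 0` as `t → +∞`; and `v` lies in `V⁺` if and only if `e^{tA} v → 0` as `t → -∞`. -/
theorem stable_unstable_subspace_characterization
    {V : Type*} [NormedAddCommGroup V] [NormedSpace ℝ V] [FiniteDimensional ℝ V]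
    (A : V →L[ℝ] V) :
    ∀ v : V,
      ((((1 : ℂ) ⊗ₜ[ℝ] v : ℂ ⊗[ℝ] V) ∈
          (⨆ μ : ℂ, ⨆ _ : μ.re < 0,
            Module.End.maxGenEigenspace ((A : V →ₗ[ℝ] V).baseChange ℂ) μ)) ↔
        Tendsto (fun t : ℝ => exp (t • A) v) atTop (𝓝 0)) ∧
      ((((1 : ℂ) ⊗ₜ[ℝ] v : ℂ ⊗[ℝ] V) ∈
          (⨆ μ : ℂ, ⨆ _ : 0 < μ.re,
            Module.End.maxGenEigenspace ((A : V →ₗ[ℝ] V).baseChange ℂ) μ)) ↔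
        Tendsto (fun t : ℝ => exp (t • A) v) atBot (𝓝 0)) := by
  -- set up a norm on the complexification
  haveI : FiniteDimensional ℝ (ℂ ⊗[ℝ] V) := Module.Finite.trans ℂ (ℂ ⊗[ℝ] V)
  let e : (ℂ ⊗[ℝ] V) ≃ₗ[ℂ] (Fin (Module.finrank ℂ (ℂ ⊗[ℝ] V)) → ℂ) :=
    (Module.finBasis ℂ (ℂ ⊗[ℝ] V)).equivFun
  letI : NormedAddCommGroup (ℂ ⊗[ℝ] V) :=
    NormedAddCommGroup.induced (ℂ ⊗[ℝ] V) (Fin (Module.finrank ℂ (ℂ ⊗[ℝ] V)) → ℂ) (e : (ℂ ⊗[ℝ] V) →ₗ[ℂ] _) e.injective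
  letI : NormedSpace ℂ (ℂ ⊗[ℝ] V) := by
    refine ⟨fun c x => ?_⟩
    change ‖e (c • x)‖ ≤ ‖c‖ * ‖e x‖
    rw [map_smul]
    exact _root_.norm_smul_le c (e x)
  letI : NormedSpace ℝ (ℂ ⊗[ℝ] V) := by
    refine ⟨fun c x => ?_⟩
    change ‖e (c • x)‖ ≤ ‖c‖ * ‖e x‖
    have h : e (c • x) = c • e x := by
      rw [← algebraMap_smul ℂ c x, map_smul, algebraMap_smul]
    rw [h]
    exact _root_.norm_smul_le c (e x)
  haveI : CompleteSpace (ℂ ⊗[ℝ] V) := FiniteDimensional.complete ℂ _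
  -- the embedding and its left inverse
  let ι : V →L[ℝ] (ℂ ⊗[ℝ] V) :=
    LinearMap.toContinuousLinearMap ((TensorProduct.mk ℝ ℂ V) 1)
  let π : (ℂ ⊗[ℝ] V) →L[ℝ] V :=
    LinearMap.toContinuousLinearMap
      (TensorProduct.lift ((LinearMap.lsmul ℝ V).comp Complex.reLm))
  have hι : ∀ u : V, ι u = (1 : ℂ) ⊗ₜ[ℝ] u := fun u => by
    simp [ι]
  have hπι : ∀ u : V, π (ι u) = u := by
    intro u
    rw [hι]
    show TensorProduct.lift ((LinearMap.lsmul ℝ V).comp Complex.reLm) ((1 : ℂ) ⊗ₜ[ℝ] u) = u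
    simp
  -- the key general claim, for an arbitrary endomorphism
  have key : ∀ A' : V →L[ℝ] V, ∀ v : V,
      ((((1 : ℂ) ⊗ₜ[ℝ] v : ℂ ⊗[ℝ] V) ∈
          (⨆ μ : ℂ, ⨆ _ : μ.re < 0,
            Module.End.maxGenEigenspace ((A' : V →ₗ[ℝ] V).baseChange ℂ) μ)) ↔
        Tendsto (fun t : ℝ => exp (t • A') v) atTop (𝓝 0)) := by
    intro A' v
    let B : (ℂ ⊗[ℝ] V) →L[ℂ] (ℂ ⊗[ℝ] V) :=
      LinearMap.toContinuousLinearMap ((A' : V →ₗ[ℝ] V).baseChange ℂ)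
    have hBl : (B : (ℂ ⊗[ℝ] V) →ₗ[ℂ] (ℂ ⊗[ℝ] V)) = (A' : V →ₗ[ℝ] V).baseChange ℂ :=
      LinearMap.coe_toContinuousLinearMap _
    have hBtmul : ∀ u : V, B ((1 : ℂ) ⊗ₜ[ℝ] u) = (1 : ℂ) ⊗ₜ[ℝ] (A' u) := by
      intro u
      show ((A' : V →ₗ[ℝ] V).baseChange ℂ) ((1 : ℂ) ⊗ₜ[ℝ] u) = (1 : ℂ) ⊗ₜ[ℝ] (A' u)
      simp
    -- bridge
    have hbridge : ∀ t : ℝ, ι (exp (t • A') v) = exp ((t : ℂ) • B) ((1 : ℂ) ⊗ₜ[ℝ] v) := by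
      intro t
      have hcomm : ∀ u : V, ι ((t • A') u) = (((t : ℂ) • B).restrictScalars ℝ) (ι u) := by
        intro u
        rw [hι, hι]
        show (1 : ℂ) ⊗ₜ[ℝ] (t • A' u) = (t : ℂ) • (B ((1 : ℂ) ⊗ₜ[ℝ] u))
        rw [hBtmul, tmul_smul, show ((t : ℂ)) = algebraMap ℝ ℂ t from rfl, algebraMap_smul]
      rw [myExp_commute ι (t • A') (((t : ℂ) • B).restrictScalars ℝ) hcomm v,
        myExp_restrict, hι]
    -- transfer of the limit
    have htrans : Tendsto (fun t : ℝ => exp (t • A') v) atTop (𝓝 0) ↔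
        Tendsto (fun t : ℝ => exp ((t : ℂ) • B) ((1 : ℂ) ⊗ₜ[ℝ] v)) atTop (𝓝 0) := by
      constructor
      · intro h
        have h2 := (ι.continuous.tendsto 0).comp h
        simp only [Function.comp_def, map_zero] at h2
        exact Tendsto.congr (fun t => hbridge t) h2
      · intro h
        have h2 := (π.continuous.tendsto 0).comp h
        simp only [Function.comp_def, map_zero] at h2
        refine Tendsto.congr (fun t => ?_) h2
        rw [← hbridge t, hπι]
    have hcore := myCore B ((1 : ℂ) ⊗ₜ[ℝ] v)
    rw [hBl] at hcore
    exact hcore.trans htrans.symm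
  intro v
  refine ⟨key A v, ?_⟩
  -- negative-time part via `-A`
  have hkeyneg := key (-A) v
  have hA : ((-A : V →L[ℝ] V) : V →ₗ[ℝ] V) = -(A : V →ₗ[ℝ] V) := by
    ext u; rfl
  have hset : (⨆ μ : ℂ, ⨆ _ : μ.re < 0,
        Module.End.maxGenEigenspace (((-A : V →L[ℝ] V) : V →ₗ[ℝ] V).baseChange ℂ) μ)
      = ⨆ ν : ℂ, ⨆ _ : 0 < ν.re,
        Module.End.maxGenEigenspace ((A : V →ₗ[ℝ] V).baseChange ℂ) ν := by
    rw [hA, LinearMap.baseChange_neg]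
    simp_rw [myMaxGen_neg]
    exact mySup_reindex _
  rw [hset] at hkeyneg
  rw [myAtBot_iff]
  have hfun : (fun t : ℝ => exp ((-t) • A) v) = fun t : ℝ => exp (t • (-A)) v := by
    funext t
    rw [neg_smul, ← smul_neg]
  rw [show (fun t : ℝ => (fun s : ℝ => exp (s • A) v) (-t))
      = fun t : ℝ => exp (t • (-A)) v from hfun]
  exact hkeyneg
end

section
/- Let G be a connected finite-dimensional real Lie group and φ a flow of automorphisms on G. Let K be a compact connected subgroup of the center of G such that every compact connected subgroup of the center of G is contained in K (the toral component of G). Then φ_t(k) = k for every t ∈ ℝ and every k ∈ K. -/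
open Set Filter Metric
open scoped Topology

section NSS

variable {E : Type*} [NormedAddCommGroup E] [NormedSpace ℝ E]
  {H : Type*} [TopologicalSpace H] (I : ModelWithCorners ℝ E H)
  (G : Type*) [Group G] [TopologicalSpace G] [ChartedSpace H G]

include I in
/-- A Lie group has no small subgroups (power formulation). -/
theorem exists_nss_nhds [LieGroup I (⊤ : ℕ∞) G] :
    ∃ U ∈ 𝓝 (1 : G), ∀ g : G, (∀ n : ℕ, g ^ n ∈ U) → g = 1 := by
  classical
  set e := extChartAt I (1 : G) with he
  set x₀ := e 1 with hx₀
  have hmd : MDifferentiableAt (I.prod I) I (fun p : G × G => p.1 * p.2) (1, 1) :=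
    (contMDiff_mul I (⊤ : ℕ∞) (G := G)).mdifferentiableAt (by simp)
  have hD := hmd.hasMFDerivAt
  set D := mfderiv (I.prod I) I (fun p : G × G => p.1 * p.2) ((1 : G), (1 : G)) with hDdef
  -- compute the derivative on the diagonal
  have hDvv : ∀ p : E × E, D p = p.1 + p.2 := by
    have hleft : ∀ v : E, D (v, 0) = v := by
      intro v
      have h1 : MDifferentiableAt I (I.prod I) (fun x : G => (x, (1 : G))) 1 :=
        mdifferentiableAt_id.prodMk mdifferentiableAt_const
      have h := mfderiv_comp (I := I) (I' := I.prod I) (I'' := I)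
        (g := fun p : G × G => p.1 * p.2) (f := fun x : G => (x, (1 : G))) (1 : G) hmd h1
      rw [mfderiv_prod_left] at h
      have h2 : ((fun p : G × G => p.1 * p.2) ∘ (fun x : G => (x, (1 : G)))) = id := by
        funext x; simp
      rw [h2, mfderiv_id] at h
      have := congrFun (congrArg DFunLike.coe h.symm) v
      exact this
    have hright : ∀ v : E, D (0, v) = v := by
      intro v
      have h1 : MDifferentiableAt I (I.prod I) (fun x : G => ((1 : G), x)) 1 :=
        mdifferentiableAt_const.prodMk mdifferentiableAt_id
      have h := mfderiv_comp (I := I) (I' := I.prod I) (I'' := I)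
        (g := fun p : G × G => p.1 * p.2) (f := fun x : G => ((1 : G), x)) (1 : G) hmd h1
      rw [mfderiv_prod_right] at h
      have h2 : ((fun p : G × G => p.1 * p.2) ∘ (fun x : G => ((1 : G), x))) = id := by
        funext x; simp
      rw [h2, mfderiv_id] at h
      have := congrFun (congrArg DFunLike.coe h.symm) v
      exact this
    intro v
    have hv : ∀ p : E × E, D p = D (p.1, 0) + D (0, p.2) := by
      intro p
      have hp : p = ((p.1, 0) : E × E) + (0, p.2) := by ext <;> simp
      calc D p = D (((p.1, 0) : E × E) + (0, p.2)) := by exact congrArg D hp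
        _ = D (p.1, 0) + D (0, p.2) := map_add _ _ _
    rw [hv, hleft, hright]
    rfl
  -- the chart estimate coming from differentiability of multiplication
  have hfd : HasFDerivWithinAt
      (writtenInExtChartAt (I.prod I) I ((1 : G), (1 : G)) (fun p : G × G => p.1 * p.2))
      D (Set.range (I.prod I)) (extChartAt (I.prod I) ((1 : G), (1 : G)) ((1 : G), (1 : G))) :=
    hD.2
  have hlo := hfd.isLittleO.def (by norm_num : (0 : ℝ) < 4⁻¹)
  rw [eventually_nhdsWithin_iff] at hlo
  rw [Metric.eventually_nhds_iff] at hlo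
  obtain ⟨δ, δpos, hδ⟩ := hlo
  have hp₀ : extChartAt (I.prod I) ((1 : G), (1 : G)) ((1 : G), (1 : G)) = (x₀, x₀) := by
    rw [extChartAt_prod]; rfl
  -- the key squaring estimate
  have key : ∀ a : G, a ∈ (extChartAt I (1 : G)).source → e a ∈ ball x₀ δ →
      7 / 4 * ‖e a - x₀‖ ≤ ‖e (a * a) - x₀‖ := by
    intro a ha hba
    have hmem : ((e a, e a) : E × E) ∈ Set.range (I.prod I) :=
      ⟨(chartAt H (1 : G) a, chartAt H (1 : G) a), rfl⟩
    have hdist : dist ((e a, e a) : E × E)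
        (extChartAt (I.prod I) ((1 : G), (1 : G)) ((1 : G), (1 : G))) < δ := by
      rw [hp₀, Prod.dist_eq]
      simpa using mem_ball.mp hba
    have hest := hδ hdist hmem
    -- compute the written-in-chart values
    have hsymm : (extChartAt (I.prod I) ((1 : G), (1 : G))).symm ((e a, e a) : E × E)
        = (a, a) := by
      rw [extChartAt_prod]
      simp only [PartialEquiv.prod_symm]
      exact Prod.ext ((extChartAt I (1 : G)).left_inv ha) ((extChartAt I (1 : G)).left_inv ha)
    have hsymm₀ : (extChartAt (I.prod I) ((1 : G), (1 : G))).symm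
        (extChartAt (I.prod I) ((1 : G), (1 : G)) ((1 : G), (1 : G))) = ((1 : G), (1 : G)) :=
      (extChartAt (I.prod I) ((1 : G), (1 : G))).left_inv
        (mem_extChartAt_source (I := I.prod I) ((1 : G), (1 : G)))
    have h11 : (1 : G) * 1 = 1 := one_mul 1
    have hFp : writtenInExtChartAt (I.prod I) I ((1 : G), (1 : G))
        (fun p : G × G => p.1 * p.2) ((e a, e a) : E × E) = e (a * a) := by
      simp only [writtenInExtChartAt, Function.comp_apply, hsymm, h11]
      rfl
    have hFp₀ : writtenInExtChartAt (I.prod I) I ((1 : G), (1 : G))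
        (fun p : G × G => p.1 * p.2)
        (extChartAt (I.prod I) ((1 : G), (1 : G)) ((1 : G), (1 : G))) = x₀ := by
      simp only [writtenInExtChartAt, Function.comp_apply, hsymm₀, h11, hx₀, he]
    rw [hFp, hFp₀, hp₀] at hest
    have hsub : ((e a, e a) : E × E) - (x₀, x₀) = (e a - x₀, e a - x₀) := rfl
    rw [hsub] at hest
    have hD2 : D ((e a - x₀, e a - x₀) : E × E) = (e a - x₀) + (e a - x₀) := hDvv _
    have hest2 : ‖e (a * a) - x₀ - ((e a - x₀) + (e a - x₀))‖ ≤
        4⁻¹ * ‖((e a - x₀, e a - x₀) : E × E)‖ := by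
      rw [← hD2]; exact hest
    have hnorm : ‖((e a - x₀, e a - x₀) : E × E)‖ = ‖e a - x₀‖ := by
      simp [Prod.norm_def]
    rw [hnorm] at hest2
    have htwo : ‖(e a - x₀) + (e a - x₀)‖ = 2 * ‖e a - x₀‖ := by
      rw [← two_smul ℝ (e a - x₀), norm_smul]; simp
    have htri := norm_sub_norm_le ((e a - x₀) + (e a - x₀)) (e (a * a) - x₀)
    have hrev : ‖(e a - x₀) + (e a - x₀) - (e (a * a) - x₀)‖ =
        ‖e (a * a) - x₀ - ((e a - x₀) + (e a - x₀))‖ := norm_sub_rev _ _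
    linarith
  -- the no-small-subgroups neighbourhood
  refine ⟨(extChartAt I (1 : G)).source ∩ e ⁻¹' ball x₀ δ, ?_, ?_⟩
  · exact Filter.inter_mem (extChartAt_source_mem_nhds (I := I) 1)
      ((continuousAt_extChartAt (I := I) 1).preimage_mem_nhds (ball_mem_nhds _ δpos))
  · intro g hg
    by_contra hne
    have hg1 := hg 1
    rw [pow_one] at hg1
    have hcpos : 0 < ‖e g - x₀‖ := by
      rw [norm_pos_iff, sub_ne_zero]
      intro heq
      apply hne
      have := congrArg (extChartAt I (1 : G)).symm heq
      rwa [(extChartAt I (1 : G)).left_inv hg1.1, hx₀, he,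
        (extChartAt I (1 : G)).left_inv (mem_extChartAt_source (I := I) 1)] at this
    have grow : ∀ n : ℕ, (7 / 4 : ℝ) ^ n * ‖e g - x₀‖ ≤ ‖e (g ^ 2 ^ n) - x₀‖ := by
      intro n
      induction n with
      | zero => simp
      | succ n ih =>
        have hgn := hg (2 ^ n)
        have hsq : g ^ 2 ^ (n + 1) = g ^ 2 ^ n * g ^ 2 ^ n := by
          rw [pow_succ, pow_mul, sq]
        rw [hsq]
        calc (7 / 4 : ℝ) ^ (n + 1) * ‖e g - x₀‖
            = 7 / 4 * ((7 / 4 : ℝ) ^ n * ‖e g - x₀‖) := by ring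
          _ ≤ 7 / 4 * ‖e (g ^ 2 ^ n) - x₀‖ := by
              have : (0 : ℝ) ≤ 7 / 4 := by norm_num
              exact mul_le_mul_of_nonneg_left ih this
          _ ≤ ‖e (g ^ 2 ^ n * g ^ 2 ^ n) - x₀‖ := key _ hgn.1 hgn.2
    obtain ⟨n, hn⟩ := pow_unbounded_of_one_lt (δ / ‖e g - x₀‖) (by norm_num : (1 : ℝ) < 7 / 4)
    have h1 : δ < (7 / 4 : ℝ) ^ n * ‖e g - x₀‖ := by
      rw [div_lt_iff₀ hcpos] at hn
      linarith
    have h2 : ‖e (g ^ 2 ^ n) - x₀‖ < δ := by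
      have := (hg (2 ^ n)).2
      rwa [Set.mem_preimage, mem_ball, dist_eq_norm] at this
    linarith [grow n]



end NSS


/-- Let `G` be a connected finite-dimensional real Lie group and `φ` a flow of
automorphisms on `G`.  Let `K` be a compact connected subgroup of the center of `G` containing
every compact connected subgroup of the center (the toral component of `G`).  Then
`φ_t(k) = k` for every `t ∈ ℝ` and every `k ∈ K`. -/
theorem flow_fixes_toral_component
    {E : Type*} [NormedAddCommGroup E] [NormedSpace ℝ E] [FiniteDimensional ℝ E]
    {H : Type*} [TopologicalSpace H] (I : ModelWithCorners ℝ E H)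
    (G : Type*) [Group G] [TopologicalSpace G] [ChartedSpace H G]
    [LieGroup I (⊤ : ℕ∞) G] [T2Space G] [ConnectedSpace G]
    (φ : ℝ → G → G)
    (hcont : Continuous fun p : ℝ × G => φ p.1 p.2)
    (h0 : φ 0 = id)
    (hflow : ∀ t s : ℝ, φ (t + s) = φ t ∘ φ s)
    (hmul : ∀ (t : ℝ) (x y : G), φ t (x * y) = φ t x * φ t y)
    (hbij : ∀ t : ℝ, Function.Bijective (φ t))
    (K : Subgroup G)
    (hKcenter : K ≤ Subgroup.center G)
    (hKcompact : IsCompact (K : Set G))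
    (hKconnected : IsConnected (K : Set G))
    (hKmax : ∀ K' : Subgroup G, K' ≤ Subgroup.center G → IsCompact (K' : Set G) →
      IsConnected (K' : Set G) → K' ≤ K) :
    ∀ t : ℝ, ∀ k ∈ K, φ t k = k := by
  haveI : IsTopologicalGroup G := topologicalGroup_of_lieGroup I (⊤ : ℕ∞)
  -- each `φ t` maps the center into the center
  have hcentermap : ∀ t : ℝ, ∀ z ∈ Subgroup.center G, φ t z ∈ Subgroup.center G := by
    intro t z hz
    rw [Subgroup.mem_center_iff]
    intro g
    obtain ⟨g', rfl⟩ := (hbij t).2 g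
    rw [← hmul, ← hmul, Subgroup.mem_center_iff.mp hz g']
  -- `φ t 1 = 1`
  have hone : ∀ t : ℝ, φ t 1 = 1 := by
    intro t
    have h := hmul t 1 1
    rw [one_mul] at h
    exact (mul_eq_left.mp h.symm)
  -- powers
  have hpow : ∀ (t : ℝ) (x : G) (n : ℕ), φ t (x ^ n) = φ t x ^ n := by
    intro t x n
    induction n with
    | zero => simpa using hone t
    | succ n ih => rw [pow_succ, hmul, ih, pow_succ]
  -- the displacement map is multiplicative in powers on `K`
  have hbpow : ∀ t : ℝ, ∀ k ∈ K, ∀ n : ℕ,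
      (φ t k * k⁻¹) ^ n = φ t (k ^ n) * (k ^ n)⁻¹ := by
    intro t k hk n
    induction n with
    | zero => simp [hone t]
    | succ n ih =>
      have hkc : k ∈ Subgroup.center G := hKcenter hk
      have hknc : (k ^ n : G) ∈ Subgroup.center G := hKcenter (pow_mem hk n)
      have hBc : ∀ g : G, g * φ t k = φ t k * g :=
        Subgroup.mem_center_iff.mp (hcentermap t k hkc)
      have hainv : ∀ g : G, g * (k ^ n)⁻¹ = (k ^ n)⁻¹ * g :=
        Subgroup.mem_center_iff.mp (Subgroup.inv_mem _ hknc)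
      rw [pow_succ, ih, pow_succ, hmul, mul_inv_rev]
      calc φ t (k ^ n) * (k ^ n)⁻¹ * (φ t k * k⁻¹)
          = φ t (k ^ n) * ((k ^ n)⁻¹ * φ t k) * k⁻¹ := by
            simp only [mul_assoc]
        _ = φ t (k ^ n) * (φ t k * (k ^ n)⁻¹) * k⁻¹ := by
            rw [hBc ((k ^ n)⁻¹)]
        _ = φ t (k ^ n) * φ t k * ((k ^ n)⁻¹ * k⁻¹) := by
            simp only [mul_assoc]
        _ = φ t (k ^ n) * φ t k * (k⁻¹ * (k ^ n)⁻¹) := by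
            rw [hainv (k⁻¹)]
  -- no small subgroups
  obtain ⟨U, hU, hUnss⟩ := exists_nss_nhds I G
  obtain ⟨V, hVU, hVopen, hV1⟩ := mem_nhds_iff.mp hU
  -- tube lemma: for small `t`, the displacement of all of `K` lies in `V`
  have hcont2 : Continuous fun p : ℝ × G => φ p.1 p.2 * p.2⁻¹ :=
    hcont.mul (continuous_snd.inv)
  have hWopen : IsOpen ((fun p : ℝ × G => φ p.1 p.2 * p.2⁻¹) ⁻¹' V) :=
    hVopen.preimage hcont2
  have hWsub : ({(0 : ℝ)} : Set ℝ) ×ˢ (K : Set G) ⊆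
      (fun p : ℝ × G => φ p.1 p.2 * p.2⁻¹) ⁻¹' V := by
    rintro ⟨t, k⟩ ⟨ht, hk⟩
    simp only [Set.mem_singleton_iff] at ht
    subst ht
    simp only [Set.mem_preimage, h0, id_eq, mul_inv_cancel]
    exact hV1
  obtain ⟨u, v, huopen, hvopen, h0u, hKv, huv⟩ :=
    generalized_tube_lemma isCompact_singleton hKcompact hWopen hWsub
  obtain ⟨ε, εpos, hball⟩ := Metric.isOpen_iff.mp huopen 0 (h0u rfl)
  -- small times fix `K` pointwise
  have hsmallt : ∀ t : ℝ, |t| < ε → ∀ k ∈ K, φ t k = k := by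
    intro t ht k hk
    have hgU : ∀ n : ℕ, (φ t k * k⁻¹) ^ n ∈ U := by
      intro n
      rw [hbpow t k hk n]
      have htu : t ∈ u := by
        apply hball
        rw [Metric.mem_ball, Real.dist_eq, sub_zero]
        exact ht
      have : ((t, k ^ n) : ℝ × G) ∈ u ×ˢ v := ⟨htu, hKv (pow_mem hk n)⟩
      exact hVU (huv this)
    exact mul_inv_eq_one.mp (hUnss _ hgU)
  -- extend to all times using the flow property
  intro t k hk
  obtain ⟨n, hn⟩ := exists_nat_gt (|t| / ε)
  have hnpos : 0 < (n : ℝ) := lt_of_le_of_lt (div_nonneg (abs_nonneg t) εpos.le) hn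
  have hsmall : |t / n| < ε := by
    rw [abs_div, abs_of_pos hnpos, div_lt_iff₀ hnpos]
    rw [div_lt_iff₀ εpos] at hn
    linarith
  have hfix : ∀ m : ℕ, ∀ k ∈ K, φ (m * (t / n)) k = k := by
    intro m
    induction m with
    | zero =>
      intro k hk
      simp [h0]
    | succ m ih =>
      intro k hk
      have hm : ((m + 1 : ℕ) : ℝ) * (t / n) = t / n + (m : ℕ) * (t / n) := by
        push_cast; ring
      rw [hm, hflow]
      have h1 := ih k hk
      simp only [Function.comp_apply, h1]
      exact hsmallt (t / n) hsmall k hk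
  have ht : ((n : ℕ) : ℝ) * (t / n) = t := by
    field_simp
  have := hfix n k hk
  rwa [ht] at this
end

section
/- Let G be a Hausdorff topological group and g ∈ G. If the closure H of the set {g^n : n ≥ 1} is compact, then H is a subgroup of G; in particular, the identity element and g^{-1} belong to H. -/
/-- Let `G` be a Hausdorff topological group and `g ∈ G`.  If the closure `H`
of `{gⁿ : n ≥ 1}` is compact, then `H` is a subgroup of `G`; in particular the identity and
`g⁻¹` belong to `H`. -/
theorem closure_of_powers_is_subgroup
    {G : Type*} [Group G] [TopologicalSpace G] [IsTopologicalGroup G] [T2Space G]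
    (g : G)
    (h : IsCompact (closure {x : G | ∃ n : ℕ, 1 ≤ n ∧ x = g ^ n})) :
    (∃ S : Subgroup G, (S : Set G) = closure {x : G | ∃ n : ℕ, 1 ≤ n ∧ x = g ^ n}) ∧
    (1 : G) ∈ closure {x : G | ∃ n : ℕ, 1 ≤ n ∧ x = g ^ n} ∧
    g⁻¹ ∈ closure {x : G | ∃ n : ℕ, 1 ≤ n ∧ x = g ^ n} := by
  set S : Set G := {x : G | ∃ n : ℕ, 1 ≤ n ∧ x = g ^ n} with hS
  set T : Set G := {x : G | ∃ k : ℕ, 1 ≤ k ∧ x = g ^ (2 * k)} with hT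
  have hTS : T ⊆ S := by
    rintro x ⟨k, hk, rfl⟩
    exact ⟨2 * k, by omega, rfl⟩
  -- closure T is a compact subsemigroup
  have hcT : IsCompact (closure T) :=
    h.of_isClosed_subset isClosed_closure (closure_mono hTS)
  have hTmul : ∀ x ∈ closure T, ∀ y ∈ closure T, x * y ∈ closure T := by
    intro x hx y hy
    refine map_mem_closure₂ continuous_mul hx hy ?_
    rintro a ⟨k, hk, rfl⟩ b ⟨l, hl, rfl⟩
    exact ⟨k + l, by omega, by rw [← pow_add]; ring_nf⟩
  obtain ⟨e, heT, hee⟩ := exists_idempotent_in_compact_subsemigroup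
    (fun r => continuous_mul_right r) (closure T)
    ⟨g ^ 2, subset_closure ⟨1, le_refl 1, by norm_num⟩⟩ hcT hTmul
  have he1 : e = 1 := by
    have := mul_eq_right.mp hee
    exact this
  have h1T : (1 : G) ∈ closure T := he1 ▸ heT
  have h1 : (1 : G) ∈ closure S := closure_mono hTS h1T
  -- g⁻¹ ∈ closure S
  have hginv : g⁻¹ ∈ closure S := by
    have : g⁻¹ * 1 ∈ closure S := by
      refine map_mem_closure (continuous_mul_left g⁻¹) h1T ?_
      rintro x ⟨k, hk, rfl⟩
      refine ⟨2 * k - 1, by omega, ?_⟩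
      have : g ^ (2 * k) = g * g ^ (2 * k - 1) := by
        rw [← pow_succ']; congr 1; omega
      rw [this, ← mul_assoc, inv_mul_cancel, one_mul]
    simpa using this
  -- closure S is multiplicatively closed
  have hmul : ∀ x ∈ closure S, ∀ y ∈ closure S, x * y ∈ closure S := by
    intro x hx y hy
    refine map_mem_closure₂ continuous_mul hx hy ?_
    rintro a ⟨n, hn, rfl⟩ b ⟨m, hm, rfl⟩
    exact ⟨n + m, by omega, by rw [pow_add]⟩
  -- all integer powers of g lie in closure S
  have hinvpow : ∀ m : ℕ, (g⁻¹) ^ (m + 1) ∈ closure S := by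
    intro m
    induction m with
    | zero => simpa using hginv
    | succ m ih =>
      have : (g⁻¹) ^ (m + 1 + 1) = (g⁻¹) ^ (m + 1) * g⁻¹ := by rw [pow_succ]
      rw [this]
      exact hmul _ ih _ hginv
  have hZ : (Subgroup.zpowers g : Set G) ⊆ closure S := by
    rintro x ⟨k, rfl⟩
    induction k using Int.rec with
    | ofNat n =>
      rcases Nat.eq_zero_or_pos n with hn | hn
      · simpa [hn] using h1
      · exact subset_closure ⟨n, hn, by simp⟩
    | negSucc n =>
      have : g ^ (Int.negSucc n) = (g⁻¹) ^ (n + 1) := by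
        rw [zpow_negSucc, inv_pow]
      show g ^ (Int.negSucc n) ∈ closure S
      rw [this]
      exact hinvpow n
  refine ⟨⟨(Subgroup.zpowers g).topologicalClosure, ?_⟩, h1, hginv⟩
  apply Set.Subset.antisymm
  · exact closure_minimal hZ isClosed_closure
  · apply closure_mono
    rintro x ⟨n, hn, rfl⟩
    exact ⟨(n : ℤ), by simp⟩
end
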